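/- arXiv:1009.4440 — 9 statements merged into one kernel-verified Lean document; each statement's English description precedes it below -/
import Mathlib

section
/- Let k ≥ 2 and let G be a finite connected simple graph whose chromatic number is at most k. If the strong k-colour graph S_k(G) is connected, then G has at least k+1 vertices, and there is no partition of the vertex set of G into two nonempty parts A and B such that every vertex of A is adjacent in G to every vertex of B (i.e., G contains no complete bipartite graph as a spanning subgraph). -/
/-- A strong `k`-colouring of `G`: a proper colouring using all `k` colours. -/
def IsStrongColoring {V : Type*} {k : ℕ} (G : SimpleGraph V) (α : V → Fin k) : Prop :=
  (∀ ⦃u v⦄, G.Adj u v → α u ≠ α v) ∧ Function.Surjective α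

/-- The strong `k`-colour graph `S_k(G)`: vertices are strong `k`-colourings,
two colourings adjacent iff they differ on exactly one vertex. -/
def strongColorGraph {V : Type*} (G : SimpleGraph V) (k : ℕ) :
    SimpleGraph {α : V → Fin k // IsStrongColoring G α} where
  Adj α β := ∃! v, α.1 v ≠ β.1 v
  symm := by
    constructor
    rintro a b ⟨v, hv, hu⟩
    exact ⟨v, hv.symm, fun w hw => hu w hw.symm⟩
  loopless := by
    constructor
    rintro a ⟨v, hv, -⟩
    exact hv rfl

private lemma reach_eq_aux {X Y : Type*} {H : SimpleGraph X} (f : X → Y)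
    (h : ∀ a b, H.Adj a b → f a = f b) {a b : X} (r : H.Reachable a b) :
    f a = f b := by
  obtain ⟨w⟩ := r
  induction w with
  | nil => rfl
  | cons h' p ih => exact (h _ _ h').trans ih

/-- Swapping two colours preserves strong colourings. -/
private lemma swap_strong {V : Type*} {k : ℕ} {G : SimpleGraph V} {α : V → Fin k}
    (hα : IsStrongColoring G α) (c d : Fin k) :
    IsStrongColoring G ((Equiv.swap c d) ∘ α) := by
  refine ⟨fun u v huv h => hα.1 huv ((Equiv.swap c d).injective h), ?_⟩
  exact (Equiv.swap c d).surjective.comp hα.2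

/-- If `k ≥ 2`, `G` is a finite connected graph with chromatic number at most `k`
and the strong `k`-colour graph `S_k(G)` is connected, then `G` has at least
`k+1` vertices and `G` has no complete bipartite spanning subgraph. -/
theorem strongColorGraph_connected_card_and_no_spanning_complete_bipartite
    {V : Type*} [Fintype V] {k : ℕ} (hk : 2 ≤ k)
    (G : SimpleGraph V) (hG : G.Connected) (hχ : G.chromaticNumber ≤ k)
    (hS : (strongColorGraph G k).Connected) :
    k + 1 ≤ Fintype.card V ∧
      ¬∃ A : Set V, A.Nonempty ∧ Aᶜ.Nonempty ∧ ∀ u ∈ A, ∀ v ∈ Aᶜ, G.Adj u v := by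
  obtain ⟨α0⟩ := hS.nonempty
  constructor
  · -- card bound
    by_contra hlt
    have hle : Fintype.card V ≤ k := by omega
    have hk' : k ≤ Fintype.card V := by simpa using Fintype.card_le_of_surjective _ α0.2.2
    have hcard : Fintype.card V = k := le_antisymm hle hk'
    have hbij : ∀ α : {α : V → Fin k // IsStrongColoring G α}, Function.Bijective α.1 := by
      intro α
      rw [Fintype.bijective_iff_surjective_and_card]
      exact ⟨α.2.2, by simp [hcard]⟩
    have hnoedge : ∀ a b : {α : V → Fin k // IsStrongColoring G α},
        ¬ (strongColorGraph G k).Adj a b := by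
      rintro a b ⟨v, hv, hu⟩
      obtain ⟨w, hw⟩ := (hbij a).2 (b.1 v)
      have hwv : w ≠ v := by
        intro h; subst h; exact hv hw
      have hbw : b.1 w = a.1 w := by
        by_contra h
        exact hwv (hu w (Ne.symm h))
      have : b.1 w = b.1 v := by rw [hbw, hw]
      exact hwv ((hbij b).1 this)
    -- construct a second distinct strong colouring
    set c0 : Fin k := ⟨0, by omega⟩
    set c1 : Fin k := ⟨1, by omega⟩
    have hc01 : c0 ≠ c1 := by
      intro h
      have := congrArg Fin.val h
      simp [c0, c1] at this
    set β0 : {α : V → Fin k // IsStrongColoring G α} :=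
      ⟨(Equiv.swap c0 c1) ∘ α0.1, swap_strong α0.2 c0 c1⟩
    have hne : α0 ≠ β0 := by
      obtain ⟨v, hv⟩ := α0.2.2 c0
      intro h
      have : α0.1 v = β0.1 v := by rw [h]
      rw [hv] at this
      simp only [β0, Function.comp_apply, hv] at this
      rw [Equiv.swap_apply_left] at this
      exact hc01 this
    exact hne (reach_eq_aux id (fun a b hab => absurd hab (hnoedge a b))
      (hS.preconnected α0 β0))
  · rintro ⟨A, hA, hAc, hadj⟩
    -- colour set on A is the complement of colour set on Aᶜ
    have himg : ∀ α : {α : V → Fin k // IsStrongColoring G α},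
        α.1 '' A = (α.1 '' Aᶜ)ᶜ := by
      intro α
      ext c
      constructor
      · rintro ⟨u, hu, rfl⟩ ⟨v, hv, hvc⟩
        exact α.2.1 (hadj u hu v hv) hvc.symm
      · intro hc
        obtain ⟨x, hx⟩ := α.2.2 c
        rcases Classical.em (x ∈ A) with hxA | hxA
        · exact ⟨x, hxA, hx⟩
        · exact absurd ⟨x, hxA, hx⟩ hc
    -- invariance of colour set on A along edges
    have hinv : ∀ a b, (strongColorGraph G k).Adj a b → a.1 '' A = b.1 '' A := by
      rintro a b ⟨v, hv, hu⟩
      have hagree : ∀ w, w ≠ v → a.1 w = b.1 w := by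
        intro w hw
        by_contra h
        exact hw (hu w h)
      rcases Classical.em (v ∈ A) with hvA | hvA
      · -- agree on Aᶜ
        have : a.1 '' Aᶜ = b.1 '' Aᶜ := by
          apply Set.image_congr
          intro x hx
          exact hagree x (fun h => hx (h ▸ hvA))
        rw [himg a, himg b, this]
      · -- agree on A
        apply Set.image_congr
        intro x hx
        exact hagree x (fun h => hvA (h ▸ hx))
    have hconst : ∀ a b : {α : V → Fin k // IsStrongColoring G α},
        a.1 '' A = b.1 '' A := by
      intro a b
      exact reach_eq_aux (fun α => α.1 '' A) hinv (hS.preconnected a b)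
    -- pick colour c on A and colour d on Aᶜ; swap them
    obtain ⟨u, hu⟩ := hA
    obtain ⟨v, hv⟩ := hAc
    set c := α0.1 u
    set d := α0.1 v
    set β0 : {α : V → Fin k // IsStrongColoring G α} :=
      ⟨(Equiv.swap c d) ∘ α0.1, swap_strong α0.2 c d⟩
    have hd_in : d ∈ β0.1 '' A := by
      refine ⟨u, hu, ?_⟩
      simp only [β0, Function.comp_apply]
      exact Equiv.swap_apply_left c d
    rw [hconst β0 α0] at hd_in
    rw [himg α0] at hd_in
    exact hd_in ⟨v, hv, rfl⟩
end

section
/- For all integers k ≥ 2 and m, n ≥ 1, the strong k-colour graph S_k(K_{m,n}) of the complete bipartite graph K_{m,n} is not connected. -/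
/-- For all `k ≥ 2` and `m, n ≥ 1`, the strong `k`-colour graph of the complete
bipartite graph `K_{m,n}` is not connected. -/
theorem strongColorGraph_completeBipartiteGraph_not_connected
    {k m n : ℕ} (hk : 2 ≤ k) (hm : 1 ≤ m) (hn : 1 ≤ n) :
    ¬(strongColorGraph (completeBipartiteGraph (Fin m) (Fin n)) k).Connected := by
  intro hconn
  haveI : NeZero k := ⟨by omega⟩
  by_cases hmn : k ≤ m + n
  case neg =>
    obtain ⟨⟨α, hprop, hsurj⟩⟩ := hconn.nonempty
    have := Fintype.card_le_of_surjective α hsurj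
    simp at this
    omega
  case pos =>
    set a : ℕ := max 1 (k - n) with ha
    have ha1 : 1 ≤ a := le_max_left _ _
    have ham : a ≤ m := by omega
    have hak : a < k := by omega
    have hka : k - a ≤ n := by omega
    let β : Fin m ⊕ Fin n → Fin k := fun v => match v with
      | .inl i => ⟨min i.1 (a - 1), by omega⟩
      | .inr j => ⟨a + min j.1 (k - a - 1), by omega⟩
    have hβprop : ∀ ⦃u v⦄, (completeBipartiteGraph (Fin m) (Fin n)).Adj u v → β u ≠ β v := by
      rintro (i | i) (j | j) hadj heq
      · simp [completeBipartiteGraph] at hadj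
      · have := congrArg Fin.val heq
        simp only [β] at this
        omega
      · have := congrArg Fin.val heq
        simp only [β] at this
        omega
      · simp [completeBipartiteGraph] at hadj
    have hβsurj : Function.Surjective β := by
      intro c
      have hc := c.isLt
      rcases lt_or_ge c.val a with h | h
      · exact ⟨.inl ⟨c.1, by omega⟩, Fin.ext (by simp only [β]; omega)⟩
      · exact ⟨.inr ⟨c.1 - a, by omega⟩, Fin.ext (by simp only [β]; omega)⟩
    let e : Equiv.Perm (Fin k) := Equiv.swap 0 ⟨a, hak⟩
    let β' : Fin m ⊕ Fin n → Fin k := e ∘ β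
    have hβ'prop : ∀ ⦃u v⦄, (completeBipartiteGraph (Fin m) (Fin n)).Adj u v → β' u ≠ β' v :=
      fun u v h heq => hβprop h (e.injective heq)
    have hβ'surj : Function.Surjective β' := e.surjective.comp hβsurj
    have key : ∀ α γ : {α // IsStrongColoring (completeBipartiteGraph (Fin m) (Fin n)) α},
        (strongColorGraph (completeBipartiteGraph (Fin m) (Fin n)) k).Adj α γ →
        (∃ i, α.1 (.inl i) = 0) → ∃ i, γ.1 (.inl i) = 0 := by
      rintro ⟨α, hαp, hαs⟩ ⟨γ, hγp, hγs⟩ ⟨v, hv, huniq⟩ ⟨i, hi⟩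
      dsimp only at hv hi huniq ⊢
      by_cases hvi : v = Sum.inl i
      · subst hvi
        obtain ⟨w, hw⟩ := hγs 0
        have hwv : w ≠ Sum.inl i := by
          rintro rfl
          exact hv (by rw [hi, hw])
        have hαw : α w = γ w := by
          by_contra h
          exact hwv (huniq w h)
        match w with
        | .inl j => exact ⟨j, hw⟩
        | .inr j =>
          exfalso
          exact hαp (u := .inl i) (v := .inr j) (by simp [completeBipartiteGraph])
            (by rw [hi, hαw, hw])
      · refine ⟨i, ?_⟩
        by_contra h
        have hne : α (Sum.inl i) ≠ γ (Sum.inl i) := by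
          rw [hi]; exact fun e => h e.symm
        exact hvi (huniq _ hne).symm
    have hwalk : ∀ {x y : {α // IsStrongColoring (completeBipartiteGraph (Fin m) (Fin n)) α}}
        (_ : (strongColorGraph (completeBipartiteGraph (Fin m) (Fin n)) k).Walk x y),
        (∃ i, x.1 (.inl i) = 0) → ∃ i, y.1 (.inl i) = 0 := by
      intro x y p
      induction p with
      | nil => exact id
      | cons h p ih => exact fun hx => ih (key _ _ h hx)
    obtain ⟨p⟩ := hconn.preconnected ⟨β, hβprop, hβsurj⟩ ⟨β', hβ'prop, hβ'surj⟩
    obtain ⟨i, hi⟩ := hwalk p ⟨⟨0, hm⟩, Fin.ext (by simp [β])⟩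
    have h1 : β (Sum.inl i) = ⟨a, hak⟩ := by
      have : e (β (Sum.inl i)) = 0 := hi
      have := congrArg e.symm this
      simpa [e, Equiv.swap_apply_left] using this
    have := congrArg Fin.val h1
    simp only [β] at this
    omega
end

section
/- Let k ≥ 2 and let G be a finite connected simple graph whose chromatic number is at most k such that the strong k-colour graph S_k(G) is connected. Let G* be the graph obtained from G by adding one new vertex v* and joining v* to exactly j vertices of G, where 1 ≤ j ≤ k − 2. Then S_k(G*) is connected. -/
/-- The graph obtained from `G` by adding one new vertex (`none`) joined
exactly to the vertices in `s`. -/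
def addVertex {V : Type*} (G : SimpleGraph V) (s : Set V) : SimpleGraph (Option V) :=
  SimpleGraph.fromRel (fun x y =>
    (∃ u v, x = some u ∧ y = some v ∧ G.Adj u v) ∨ (x = none ∧ ∃ v ∈ s, y = some v))

namespace StrongProofAux

variable {V : Type*} {k : ℕ}

lemma star_adj_some_some {G : SimpleGraph V} {s : Set V} {u v : V} :
    (addVertex G s).Adj (some u) (some v) ↔ G.Adj u v := by
  unfold addVertex
  rw [SimpleGraph.fromRel_adj]
  constructor
  · rintro ⟨-, h | h⟩
    · rcases h with ⟨a, b, ha, hb, hab⟩ | ⟨h, -⟩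
      · rw [Option.some_inj] at ha hb; rw [ha, hb]; exact hab
      · exact absurd h (by simp)
    · rcases h with ⟨a, b, ha, hb, hab⟩ | ⟨h, -⟩
      · rw [Option.some_inj] at ha hb; rw [ha, hb]; exact hab.symm
      · exact absurd h (by simp)
  · intro h
    exact ⟨by simpa using h.ne, Or.inl (Or.inl ⟨u, v, rfl, rfl, h⟩)⟩

lemma star_adj_none_some {G : SimpleGraph V} {s : Set V} {v : V} :
    (addVertex G s).Adj none (some v) ↔ v ∈ s := by
  unfold addVertex
  rw [SimpleGraph.fromRel_adj]
  constructor
  · rintro ⟨-, h | h⟩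
    · rcases h with ⟨a, b, ha, -, -⟩ | ⟨-, w, hw, hws⟩
      · exact absurd ha (by simp)
      · rw [Option.some_inj] at hws; rwa [hws]
    · rcases h with ⟨a, b, -, hb, -⟩ | ⟨h, -⟩
      · exact absurd hb (by simp)
      · exact absurd h (by simp)
  · intro h
    exact ⟨by simp, Or.inl (Or.inr ⟨rfl, v, h, rfl⟩)⟩

lemma isStrong_star_iff {G : SimpleGraph V} {s : Set V} (β : Option V → Fin k) :
    IsStrongColoring (addVertex G s) β ↔
      ((∀ ⦃u v : V⦄, G.Adj u v → β (some u) ≠ β (some v)) ∧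
       (∀ v ∈ s, β (some v) ≠ β none) ∧ Function.Surjective β) := by
  constructor
  · intro h
    exact ⟨fun u v huv => h.1 (star_adj_some_some.2 huv),
      fun v hv => (h.1 (star_adj_none_some.2 hv)).symm, h.2⟩
  · rintro ⟨h1, h2, h3⟩
    refine ⟨?_, h3⟩
    intro x y hxy
    match x, y with
    | some u, some v => exact h1 (star_adj_some_some.1 hxy)
    | none, some v => exact (h2 v (star_adj_none_some.1 hxy)).symm
    | some v, none => exact h2 v (star_adj_none_some.1 hxy.symm)
    | none, none => exact absurd hxy (SimpleGraph.irrefl _)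

lemma scg_adj_of {G : SimpleGraph V} {a b : {α : V → Fin k // IsStrongColoring G α}}
    (w : V) (hw : a.1 w ≠ b.1 w) (h : ∀ z, z ≠ w → a.1 z = b.1 z) :
    (strongColorGraph G k).Adj a b :=
  ⟨w, hw, fun z hz => by_contra fun hne => hz (h z hne)⟩

lemma scg_adj_elim {G : SimpleGraph V} {a b : {α : V → Fin k // IsStrongColoring G α}}
    (h : (strongColorGraph G k).Adj a b) :
    ∃ w, a.1 w ≠ b.1 w ∧ ∀ z, z ≠ w → a.1 z = b.1 z := by
  obtain ⟨w, hw, hu⟩ := h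
  exact ⟨w, hw, fun z hz => by_contra fun hne => hz (hu z hne)⟩

lemma exists_color_notin (A : Finset (Fin k)) (h : A.card < k) : ∃ a : Fin k, a ∉ A := by
  by_contra hc
  push_neg at hc
  have hsub : (Finset.univ : Finset (Fin k)) ⊆ A := fun a _ => hc a
  have := Finset.card_le_card hsub
  simp [Finset.card_univ] at this
  omega

lemma exists_dup [Fintype V] (σ : V → Fin k) (c : Fin k) (hmiss : ∀ v, σ v ≠ c)
    (hcard : k ≤ Fintype.card V) : ∃ x z, z ≠ x ∧ σ z = σ x := by
  have hmaps : ∀ v ∈ (Finset.univ : Finset V), σ v ∈ (Finset.univ.erase c) :=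
    fun v _ => Finset.mem_erase.2 ⟨hmiss v, Finset.mem_univ _⟩
  have hk0 : 0 < k := c.pos
  have hlt : (Finset.univ.erase c).card < (Finset.univ : Finset V).card := by
    rw [Finset.card_erase_of_mem (Finset.mem_univ c)]
    simp only [Finset.card_univ, Fintype.card_fin]
    omega
  obtain ⟨x, -, z, -, hne, heq⟩ := Finset.exists_ne_map_eq_of_card_lt_of_maps_to hlt hmaps
  exact ⟨z, x, hne, heq⟩


def Xset {V : Type*} {k : ℕ} (G : SimpleGraph V) (s : Set V)
    (β : {α : Option V → Fin k // IsStrongColoring (addVertex G s) α}) (x : V) : Prop :=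
  ∃ β', (strongColorGraph (addVertex G s) k).Reachable β β' ∧
    ∃ z, z ≠ x ∧ β'.1 (some z) = β'.1 (some x)

lemma main_escape {V : Type*} [Fintype V] {k j : ℕ} (hk : 2 ≤ k)
    (G : SimpleGraph V) (hS : (strongColorGraph G k).Connected)
    (s : Finset V) (hcard : s.card = j) (hj2 : j ≤ k - 2)
    (β : {α : Option V → Fin k // IsStrongColoring (addVertex G ↑s) α}) :
    ∃ β', (strongColorGraph (addVertex G ↑s) k).Reachable β β' ∧
      Function.Surjective (fun v => β'.1 (some v)) := by
  classical
  by_contra hngood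
  push_neg at hngood
  -- the missing colour c = β none
  obtain ⟨c, hc0⟩ : ∃ c : Fin k, ∀ v : V, β.1 (some v) ≠ c := by
    have h := hngood β (SimpleGraph.Reachable.refl β)
    unfold Function.Surjective at h
    push_neg at h
    exact h
  have hβmiss : ∀ v : V, β.1 (some v) ≠ c := fun v => hc0 v
  have hβnone : β.1 none = c := by
    obtain ⟨z, hz⟩ := β.2.2 c
    match z with
    | some v => exact absurd hz (hβmiss v)
    | none => exact hz
  -- one-step structure: neighbours of "bad" states are surjective-restriction or bad
  have hstep : ∀ β₁ β₂ : {α : Option V → Fin k // IsStrongColoring (addVertex G ↑s) α},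
      (β₁.1 none = c ∧ ∀ v, β₁.1 (some v) ≠ c) →
      (strongColorGraph (addVertex G ↑s) k).Adj β₁ β₂ →
      (Function.Surjective (fun v => β₂.1 (some v)) ∨
        (β₂.1 none = c ∧ ∀ v, β₂.1 (some v) ≠ c)) := by
    intro β₁ β₂ hbad hadj
    obtain ⟨w, hw, hrest⟩ := scg_adj_elim hadj
    match w with
    | none =>
      exfalso
      obtain ⟨z, hz⟩ := β₂.2.2 c
      match z with
      | none => rw [hbad.1] at hw; exact hw hz.symm
      | some v =>
        have hv := hrest (some v) (by simp)
        exact hbad.2 v (hv.trans hz)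
    | some u =>
      have hnone : β₂.1 none = c := (hrest none (by simp)).symm.trans hbad.1
      by_cases hcu : β₂.1 (some u) = c
      · left
        intro g
        obtain ⟨z, hz⟩ := β₂.2.2 g
        match z with
        | some v => exact ⟨v, hz⟩
        | none => exact ⟨u, by show β₂.1 (some u) = g; rw [hcu, ← hz, hnone]⟩
      · right
        refine ⟨hnone, fun v => ?_⟩
        by_cases hvu : v = u
        · rw [hvu]; exact hcu
        · rw [← hrest (some v) (by simp [hvu])]
          exact hbad.2 v
  -- all reachable states are bad
  have hbadall : ∀ β', (strongColorGraph (addVertex G ↑s) k).Reachable β β' →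
      (β'.1 none = c ∧ ∀ v, β'.1 (some v) ≠ c) := by
    have haux : ∀ (β₁ β₂ : {α : Option V → Fin k // IsStrongColoring (addVertex G ↑s) α})
        (_ : (strongColorGraph (addVertex G ↑s) k).Walk β₁ β₂),
        (strongColorGraph (addVertex G ↑s) k).Reachable β β₁ →
        (β₁.1 none = c ∧ ∀ v, β₁.1 (some v) ≠ c) →
        (β₂.1 none = c ∧ ∀ v, β₂.1 (some v) ≠ c) := by
      intro β₁ β₂ p
      induction p with
      | nil => exact fun _ h => h
      | cons hadj q ih =>
        intro hr hb
        rcases hstep _ _ hb hadj with hsurj | hb₂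
        · exact absurd hsurj (hngood _ (hr.trans hadj.reachable))
        · exact ih (hr.trans hadj.reachable) hb₂
    intro β' hr
    obtain ⟨p⟩ := hr
    exact haux β β' p (SimpleGraph.Reachable.refl β) ⟨hβnone, hβmiss⟩
  -- X-vertices lie in s
  have hXs : ∀ x, Xset G ↑s β x → x ∈ s := by
    intro x hx
    obtain ⟨β', hr, z, hzx, hdup⟩ := hx
    by_contra hxs
    have hb' := hbadall β' hr
    set f : Option V → Fin k := Function.update β'.1 (some x) c with hfdef
    have hfnone : f none = β'.1 none := Function.update_of_ne (by simp) _ _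
    have hfsome : ∀ v : V, v ≠ x → f (some v) = β'.1 (some v) := fun v hv =>
      Function.update_of_ne (by simp [hv]) _ _
    have hfx : f (some x) = c := Function.update_self _ _ _
    have hstrong : IsStrongColoring (addVertex G ↑s) f := by
      rw [isStrong_star_iff]
      refine ⟨?_, ?_, ?_⟩
      · intro u v huv
        by_cases hux : u = x
        · subst hux
          have hvx : v ≠ u := fun h => (h ▸ huv).ne rfl
          rw [hfx, hfsome v (fun h => hvx h)]
          exact fun h => hb'.2 v h.symm
        · by_cases hvx : v = x
          · subst hvx
            rw [hfx, hfsome u hux]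
            exact hb'.2 u
          · rw [hfsome u hux, hfsome v hvx]
            exact β'.2.1 (star_adj_some_some.2 huv)
      · intro v hv
        have hvmem : v ∈ s := by simpa using hv
        have hvx : v ≠ x := fun h => hxs (h ▸ hvmem)
        rw [hfnone, hfsome v hvx, hb'.1]
        exact hb'.2 v
      · intro g
        by_cases hgc : g = c
        · exact ⟨some x, by rw [hfx, hgc]⟩
        · obtain ⟨zz, hzz⟩ := β'.2.2 g
          match zz with
          | none => exact absurd (hzz.symm.trans hb'.1) hgc
          | some v =>
            by_cases hvx : v = x
            · subst hvx
              exact ⟨some z, by rw [hfsome z hzx, hdup, hzz]⟩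
            · exact ⟨some v, by rw [hfsome v hvx, hzz]⟩
    have hadj : (strongColorGraph (addVertex G ↑s) k).Adj β' ⟨f, hstrong⟩ := by
      apply scg_adj_of (some x)
      · show β'.1 (some x) ≠ f (some x)
        rw [hfx]
        exact hb'.2 x
      · intro zq hzq
        match zq with
        | none => exact hfnone.symm
        | some v =>
          have hvx : v ≠ x := fun h => hzq (by rw [h])
          exact (hfsome v hvx).symm
    have hsurj : Function.Surjective (fun v => f (some v)) := by
      intro g
      by_cases hgc : g = c
      · exact ⟨x, by show f (some x) = g; rw [hfx, hgc]⟩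
      · obtain ⟨zz, hzz⟩ := β'.2.2 g
        match zz with
        | none => exact absurd (hzz.symm.trans hb'.1) hgc
        | some v =>
          by_cases hvx : v = x
          · subst hvx
            exact ⟨z, by show f (some z) = g; rw [hfsome z hzx, hdup, hzz]⟩
          · exact ⟨v, by show f (some v) = g; rw [hfsome v hvx, hzz]⟩
    exact hngood ⟨f, hstrong⟩ (hr.trans hadj.reachable) hsurj
  -- vertices outside X are frozen
  have hfrozen : ∀ β', (strongColorGraph (addVertex G ↑s) k).Reachable β β' →
      ∀ y, ¬ Xset G ↑s β y → β'.1 (some y) = β.1 (some y) := by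
    have haux : ∀ (β₁ β₂ : {α : Option V → Fin k // IsStrongColoring (addVertex G ↑s) α})
        (_ : (strongColorGraph (addVertex G ↑s) k).Walk β₁ β₂),
        (strongColorGraph (addVertex G ↑s) k).Reachable β β₁ →
        (∀ y, ¬ Xset G ↑s β y → β₁.1 (some y) = β.1 (some y)) →
        (∀ y, ¬ Xset G ↑s β y → β₂.1 (some y) = β.1 (some y)) := by
      intro β₁ β₂ p
      induction p with
      | nil => exact fun _ h => h
      | cons hadj q ih =>
        rename_i a b c'
        intro hr hq
        refine ih (hr.trans hadj.reachable) ?_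
        obtain ⟨w, hw, hrest⟩ := scg_adj_elim hadj
        have hba := hbadall a hr
        have hbb := hbadall b (hr.trans hadj.reachable)
        match w with
        | none => exact absurd (hba.1.trans hbb.1.symm) hw
        | some u =>
          have hXu : Xset G ↑s β u := by
            refine ⟨a, hr, ?_⟩
            obtain ⟨z, hz⟩ := b.2.2 (a.1 (some u))
            match z with
            | none => exact absurd (hbb.1.symm.trans hz).symm (hba.2 u)
            | some v =>
              have hvu : v ≠ u := by
                intro h; subst h; exact hw hz.symm
              exact ⟨v, hvu, (hrest (some v) (by simp [hvu])).trans hz⟩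
          intro y hy
          have hyu : (some y : Option V) ≠ some u := by
            simp only [ne_eq, Option.some.injEq]
            intro h; exact hy (h ▸ hXu)
          rw [← hrest (some y) hyu]
          exact hq y hy
    intro β' hr
    obtain ⟨p⟩ := hr
    exact haux β β' p (SimpleGraph.Reachable.refl β) (fun y _ => rfl)
  -- injectivity of β on the complement of X
  have hinj : ∀ z w : V, ¬ Xset G ↑s β z → z ≠ w → β.1 (some z) ≠ β.1 (some w) := by
    intro z w hz hzw heq
    exact hz ⟨β, SimpleGraph.Reachable.refl β, w, fun h => hzw h.symm, heq.symm⟩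
  -- unique holder of colours of non-X vertices
  have huniq : ∀ β', (strongColorGraph (addVertex G ↑s) k).Reachable β β' →
      ∀ y, ¬ Xset G ↑s β y → ∀ v, β'.1 (some v) = β.1 (some y) → v = y := by
    intro β' hr y hy v hv
    by_contra hvy
    refine hy ⟨β', hr, v, hvy, ?_⟩
    rw [hv, ← hfrozen β' hr y hy]
  -- complete bipartite between X and its complement
  have hCB : ∀ x y, Xset G ↑s β x → ¬ Xset G ↑s β y → G.Adj x y := by
    intro x y hx hy
    by_contra hnadj
    have hxy : x ≠ y := fun h => hy (h ▸ hx)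
    obtain ⟨β', hr, z, hzx, hdup⟩ := hx
    have hb' := hbadall β' hr
    have hdc : β.1 (some y) ≠ c := hβmiss y
    set f : Option V → Fin k := Function.update β'.1 (some x) (β.1 (some y)) with hfdef
    have hfnone : f none = β'.1 none := Function.update_of_ne (by simp) _ _
    have hfsome : ∀ v : V, v ≠ x → f (some v) = β'.1 (some v) := fun v hv =>
      Function.update_of_ne (by simp [hv]) _ _
    have hfx : f (some x) = β.1 (some y) := Function.update_self _ _ _
    have hstrong : IsStrongColoring (addVertex G ↑s) f := by
      rw [isStrong_star_iff]
      refine ⟨?_, ?_, ?_⟩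
      · intro u v huv
        by_cases hux : u = x
        · subst hux
          have hvx : v ≠ u := fun h => (h ▸ huv).ne rfl
          rw [hfx, hfsome v (fun h => hvx h)]
          intro h
          exact hnadj ((huniq β' hr y hy v h.symm) ▸ huv)
        · by_cases hvx : v = x
          · subst hvx
            rw [hfsome u hux, hfx]
            intro h
            exact hnadj ((huniq β' hr y hy u h) ▸ huv.symm)
          · rw [hfsome u hux, hfsome v hvx]
            exact β'.2.1 (star_adj_some_some.2 huv)
      · intro v hv
        rw [hfnone, hb'.1]
        by_cases hvx : v = x
        · subst hvx; rw [hfx]; exact hdc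
        · rw [hfsome v hvx]; exact hb'.2 v
      · intro g
        by_cases hgx : g = β.1 (some y)
        · exact ⟨some x, by rw [hfx, hgx]⟩
        · obtain ⟨zz, hzz⟩ := β'.2.2 g
          match zz with
          | none => exact ⟨none, hfnone.trans hzz⟩
          | some v =>
            by_cases hvx : v = x
            · subst hvx
              exact ⟨some z, by rw [hfsome z hzx, hdup, hzz]⟩
            · exact ⟨some v, by rw [hfsome v hvx, hzz]⟩
    have hneq : β'.1 (some x) ≠ β.1 (some y) := by
      intro h
      exact hxy (huniq β' hr y hy x h)
    have hadj : (strongColorGraph (addVertex G ↑s) k).Adj β' ⟨f, hstrong⟩ := by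
      apply scg_adj_of (some x)
      · show β'.1 (some x) ≠ f (some x)
        rw [hfx]
        exact hneq
      · intro zq hzq
        match zq with
        | none => exact hfnone.symm
        | some v =>
          have hvx : v ≠ x := fun h => hzq (by rw [h])
          exact (hfsome v hvx).symm
    refine hy ⟨⟨f, hstrong⟩, hr.trans hadj.reachable, x, hxy, ?_⟩
    show f (some x) = f (some y)
    rw [hfx, hfsome y (fun h => hxy h.symm)]
    exact (hfrozen β' hr y hy).symm
  -- |V| ≥ k
  obtain ⟨γ₀⟩ := hS.nonempty
  have hcardV : k ≤ Fintype.card V := by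
    have := Fintype.card_le_of_surjective γ₀.1 γ₀.2.2
    simpa using this
  obtain ⟨x₀, z₀, hz₀, hdup₀⟩ := exists_dup (fun v => β.1 (some v)) c hβmiss hcardV
  have hX₀ : Xset G ↑s β x₀ := ⟨β, SimpleGraph.Reachable.refl β, z₀, hz₀, hdup₀⟩
  obtain ⟨y₀, hy₀s⟩ : ∃ y₀ : V, y₀ ∉ s := by
    by_contra hall
    push_neg at hall
    have hsub : (Finset.univ : Finset V) ⊆ s := fun a _ => hall a
    have hle := Finset.card_le_card hsub
    rw [Finset.card_univ, hcard] at hle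
    omega
  have hY₀ : ¬ Xset G ↑s β y₀ := fun h => hy₀s (hXs y₀ h)
  have hy₀x₀ : y₀ ≠ x₀ := fun h => hY₀ (h ▸ hX₀)
  -- the strong colouring δ₀ of G obtained by folding c into x₀
  set δ₀ : V → Fin k := Function.update (fun v => β.1 (some v)) x₀ c with hδ₀def
  have hδ₀x : δ₀ x₀ = c := Function.update_self _ _ _
  have hδ₀v : ∀ v, v ≠ x₀ → δ₀ v = β.1 (some v) := fun v hv => Function.update_of_ne hv _ _
  have hδ₀strong : IsStrongColoring G δ₀ := by
    constructor
    · intro u v huv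
      by_cases hux : u = x₀
      · subst hux
        have hvx : v ≠ u := fun h => (h ▸ huv).ne rfl
        rw [hδ₀x, hδ₀v v (fun h => hvx h)]
        exact fun h => hβmiss v h.symm
      · by_cases hvx : v = x₀
        · subst hvx
          rw [hδ₀x, hδ₀v u hux]
          exact hβmiss u
        · rw [hδ₀v u hux, hδ₀v v hvx]
          exact β.2.1 (star_adj_some_some.2 huv)
    · intro g
      by_cases hgc : g = c
      · exact ⟨x₀, by rw [hδ₀x, hgc]⟩
      · obtain ⟨zz, hzz⟩ := β.2.2 g
        match zz with
        | none => exact absurd (hzz.symm.trans hβnone) hgc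
        | some v =>
          by_cases hvx : v = x₀
          · subst hvx
            exact ⟨z₀, by rw [hδ₀v z₀ hz₀, hdup₀, hzz]⟩
          · exact ⟨v, by rw [hδ₀v v hvx, hzz]⟩
  have hdc : β.1 (some y₀) ≠ c := hβmiss y₀
  set τ := Equiv.swap c (β.1 (some y₀)) with hτdef
  set δs : V → Fin k := fun v => τ (δ₀ v) with hδsdef
  have hδsstrong : IsStrongColoring G δs := by
    constructor
    · intro u v huv h
      exact hδ₀strong.1 huv (τ.injective h)
    · intro g
      obtain ⟨v, hv⟩ := hδ₀strong.2 (τ.symm g)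
      exact ⟨v, by show τ (δ₀ v) = g; rw [hv]; exact τ.apply_symm_apply g⟩
  -- invariant along the strong colour graph of G
  have hJstep : ∀ a b : {α : V → Fin k // IsStrongColoring G α},
      (strongColorGraph G k).Adj a b →
      ((∀ y, ¬ Xset G ↑s β y → a.1 y = β.1 (some y)) ∧
        (∀ x, Xset G ↑s β x → ∀ y, ¬ Xset G ↑s β y → a.1 x ≠ β.1 (some y))) →
      ((∀ y, ¬ Xset G ↑s β y → b.1 y = β.1 (some y)) ∧
        (∀ x, Xset G ↑s β x → ∀ y, ¬ Xset G ↑s β y → b.1 x ≠ β.1 (some y))) := by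
    intro a b hadj hJ
    obtain ⟨w, hw, hrest⟩ := scg_adj_elim hadj
    have hXw : Xset G ↑s β w := by
      by_contra hnXw
      obtain ⟨z, hz⟩ := b.2.2 (β.1 (some w))
      have hzw : z ≠ w := by
        intro h
        subst h
        rw [hJ.1 z hnXw] at hw
        exact hw hz.symm
      have haz : a.1 z = β.1 (some w) := (hrest z hzw).trans hz
      by_cases hXz : Xset G ↑s β z
      · exact hJ.2 z hXz w hnXw haz
      · exact hinj z w hXz hzw ((hJ.1 z hXz).symm.trans haz)
    constructor
    · intro y hy
      have hyw : y ≠ w := fun h => hy (h ▸ hXw)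
      rw [← hrest y hyw]
      exact hJ.1 y hy
    · intro x hx y hy
      by_cases hxw : x = w
      · subst hxw
        intro h
        have hadjxy : G.Adj x y := hCB x y hx hy
        have hby : b.1 y = β.1 (some y) := by
          have hyw : y ≠ x := fun hh => hy (hh ▸ hx)
          rw [← hrest y hyw]
          exact hJ.1 y hy
        exact b.2.1 hadjxy (h.trans hby.symm)
      · rw [← hrest x hxw]
        exact hJ.2 x hx y hy
  have hJall : ∀ (a b : {α : V → Fin k // IsStrongColoring G α})
      (_ : (strongColorGraph G k).Walk a b),
      ((∀ y, ¬ Xset G ↑s β y → a.1 y = β.1 (some y)) ∧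
        (∀ x, Xset G ↑s β x → ∀ y, ¬ Xset G ↑s β y → a.1 x ≠ β.1 (some y))) →
      ((∀ y, ¬ Xset G ↑s β y → b.1 y = β.1 (some y)) ∧
        (∀ x, Xset G ↑s β x → ∀ y, ¬ Xset G ↑s β y → b.1 x ≠ β.1 (some y))) := by
    intro a b p
    induction p with
    | nil => exact fun h => h
    | cons hadj q ih => exact fun h => ih (hJstep _ _ hadj h)
  have hJ₀ : (∀ y, ¬ Xset G ↑s β y → δ₀ y = β.1 (some y)) ∧
      (∀ x, Xset G ↑s β x → ∀ y, ¬ Xset G ↑s β y → δ₀ x ≠ β.1 (some y)) := by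
    constructor
    · intro y hy
      exact hδ₀v y (fun h => hy (h ▸ hX₀))
    · intro x hx y hy
      by_cases hxx : x = x₀
      · subst hxx
        rw [hδ₀x]
        exact fun h => hβmiss y h.symm
      · rw [hδ₀v x hxx]
        intro h
        exact hy ((huniq β (SimpleGraph.Reachable.refl β) y hy x h) ▸ hx)
  obtain ⟨p⟩ := hS.preconnected ⟨δ₀, hδ₀strong⟩ ⟨δs, hδsstrong⟩
  have hJs := hJall _ _ p hJ₀
  have h1 : δs y₀ = β.1 (some y₀) := hJs.1 y₀ hY₀
  have h2 : δs y₀ = c := by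
    show τ (δ₀ y₀) = c
    rw [hδ₀v y₀ hy₀x₀]
    exact Equiv.swap_apply_right c (β.1 (some y₀))
  rw [h2] at h1
  exact hβmiss y₀ h1.symm


lemma lift_strong {G : SimpleGraph V} {s : Finset V} (γ : V → Fin k)
    (hγ : IsStrongColoring G γ) (a : Fin k) (ha : ∀ v ∈ s, γ v ≠ a) :
    IsStrongColoring (addVertex G ↑s) (fun z => z.elim a γ) := by
  rw [isStrong_star_iff]
  refine ⟨?_, ?_, ?_⟩
  · intro u v huv
    exact hγ.1 huv
  · intro v hv
    exact ha v (by simpa using hv)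
  · intro g
    obtain ⟨v, hv⟩ := hγ.2 g
    exact ⟨some v, hv⟩

lemma lift_vmove {G : SimpleGraph V} {s : Finset V} (γ : V → Fin k)
    (hγ : IsStrongColoring G γ) (a b : Fin k) (ha : ∀ v ∈ s, γ v ≠ a)
    (hb : ∀ v ∈ s, γ v ≠ b) :
    (strongColorGraph (addVertex G ↑s) k).Reachable
      ⟨fun z => z.elim a γ, lift_strong γ hγ a ha⟩
      ⟨fun z => z.elim b γ, lift_strong γ hγ b hb⟩ := by
  by_cases hab : a = b
  · subst hab
    exact SimpleGraph.Reachable.refl _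
  · apply SimpleGraph.Adj.reachable
    apply scg_adj_of (none : Option V)
    · exact hab
    · intro z hz
      match z with
      | none => exact absurd rfl hz
      | some v => rfl

lemma lift_edge {j : ℕ} {G : SimpleGraph V} {s : Finset V} (hk : 2 ≤ k) (hcard : s.card = j)
    (hj2 : j ≤ k - 2) (γ γ' : {α : V → Fin k // IsStrongColoring G α})
    (hadj : (strongColorGraph G k).Adj γ γ') (a : Fin k) (ha : ∀ v ∈ s, γ.1 v ≠ a) :
    ∃ (b : Fin k) (hb : ∀ v ∈ s, γ'.1 v ≠ b),
      (strongColorGraph (addVertex G ↑s) k).Reachable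
        ⟨fun z => z.elim a γ.1, lift_strong γ.1 γ.2 a ha⟩
        ⟨fun z => z.elim b γ'.1, lift_strong γ'.1 γ'.2 b hb⟩ := by
  classical
  obtain ⟨w, hw, hrest⟩ := scg_adj_elim hadj
  have hcardA : (s.image γ.1 ∪ {γ'.1 w}).card < k := by
    have h1 := Finset.card_union_le (s.image γ.1) ({γ'.1 w} : Finset (Fin k))
    have h2 : (s.image γ.1).card ≤ j := hcard ▸ Finset.card_image_le
    simp only [Finset.card_singleton] at h1
    omega
  obtain ⟨b, hb⟩ := exists_color_notin _ hcardA
  have hbγ : ∀ v ∈ s, γ.1 v ≠ b := by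
    intro v hv h
    exact hb (Finset.mem_union_left _ (h ▸ Finset.mem_image_of_mem γ.1 hv))
  have hbγ' : ∀ v ∈ s, γ'.1 v ≠ b := by
    intro v hv h
    by_cases hvw : v = w
    · subst hvw
      exact hb (Finset.mem_union_right _ (by simp [h.symm]))
    · rw [← hrest v hvw] at h
      exact hbγ v hv h
  refine ⟨b, hbγ', ?_⟩
  refine (lift_vmove γ.1 γ.2 a b ha hbγ).trans (SimpleGraph.Adj.reachable ?_)
  apply scg_adj_of (some w)
  · exact hw
  · intro z hz
    match z with
    | none => rfl
    | some v =>
      have hvw : v ≠ w := fun h => hz (by rw [h])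
      exact hrest v hvw

lemma lift_walk {j : ℕ} {G : SimpleGraph V} {s : Finset V} (hk : 2 ≤ k) (hcard : s.card = j)
    (hj2 : j ≤ k - 2) :
    ∀ (γ γ' : {α : V → Fin k // IsStrongColoring G α})
      (_ : (strongColorGraph G k).Walk γ γ') (a : Fin k) (ha : ∀ v ∈ s, γ.1 v ≠ a),
      ∃ (b : Fin k) (hb : ∀ v ∈ s, γ'.1 v ≠ b),
        (strongColorGraph (addVertex G ↑s) k).Reachable
          ⟨fun z => z.elim a γ.1, lift_strong γ.1 γ.2 a ha⟩
          ⟨fun z => z.elim b γ'.1, lift_strong γ'.1 γ'.2 b hb⟩ := by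
  intro γ γ' p
  induction p with
  | nil => exact fun a ha => ⟨a, ha, SimpleGraph.Reachable.refl _⟩
  | cons hadj q ih =>
    intro a ha
    obtain ⟨b1, hb1, hr1⟩ := lift_edge hk hcard hj2 _ _ hadj a ha
    obtain ⟨b2, hb2, hr2⟩ := ih b1 hb1
    exact ⟨b2, hb2, hr1.trans hr2⟩

end StrongProofAux

open StrongProofAux in
/-- Adding a new vertex joined to `j` vertices of `G`, with `1 ≤ j ≤ k - 2`,
preserves connectedness of the strong `k`-colour graph. -/
theorem strongColorGraph_addVertex_connected
    {V : Type*} [Fintype V] {k j : ℕ} (hk : 2 ≤ k)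
    (G : SimpleGraph V) (hG : G.Connected) (hχ : G.chromaticNumber ≤ k)
    (hS : (strongColorGraph G k).Connected)
    (s : Finset V) (hcard : s.card = j) (hj1 : 1 ≤ j) (hj2 : j ≤ k - 2) :
    (strongColorGraph (addVertex G ↑s) k).Connected := by
  classical
  rw [SimpleGraph.connected_iff]
  constructor
  · intro β₁ β₂
    obtain ⟨β₁', r₁, h1⟩ := main_escape hk G hS s hcard hj2 β₁
    obtain ⟨β₂', r₂, h2⟩ := main_escape hk G hS s hcard hj2 β₂
    refine r₁.trans (SimpleGraph.Reachable.trans ?_ r₂.symm)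
    have hst1 : IsStrongColoring G (fun v => β₁'.1 (some v)) :=
      ⟨fun u v huv => β₁'.2.1 (star_adj_some_some.2 huv), h1⟩
    have hst2 : IsStrongColoring G (fun v => β₂'.1 (some v)) :=
      ⟨fun u v huv => β₂'.2.1 (star_adj_some_some.2 huv), h2⟩
    have hval1 : ∀ v ∈ s, β₁'.1 (some v) ≠ β₁'.1 none := fun v hv =>
      (β₁'.2.1 (star_adj_none_some.2 (by simpa using hv))).symm
    have hval2 : ∀ v ∈ s, β₂'.1 (some v) ≠ β₂'.1 none := fun v hv =>
      (β₂'.2.1 (star_adj_none_some.2 (by simpa using hv))).symm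
    have he1 : β₁' = ⟨fun z => z.elim (β₁'.1 none) (fun v => β₁'.1 (some v)),
        lift_strong _ hst1 _ hval1⟩ := by
      apply Subtype.ext
      funext z
      match z with
      | none => rfl
      | some v => rfl
    have he2 : β₂' = ⟨fun z => z.elim (β₂'.1 none) (fun v => β₂'.1 (some v)),
        lift_strong _ hst2 _ hval2⟩ := by
      apply Subtype.ext
      funext z
      match z with
      | none => rfl
      | some v => rfl
    obtain ⟨p⟩ := hS.preconnected ⟨_, hst1⟩ ⟨_, hst2⟩
    obtain ⟨b, hb, hr⟩ := lift_walk hk hcard hj2 ⟨_, hst1⟩ ⟨_, hst2⟩ p (β₁'.1 none) hval1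
    rw [he1, he2]
    exact hr.trans (lift_vmove _ hst2 b (β₂'.1 none) hb hval2)
  · obtain ⟨γ₀⟩ := hS.nonempty
    have hcardim : (s.image γ₀.1).card < k := by
      have h2 : (s.image γ₀.1).card ≤ j := hcard ▸ Finset.card_image_le
      omega
    obtain ⟨a, ha⟩ := exists_color_notin _ hcardim
    have haγ : ∀ v ∈ s, γ₀.1 v ≠ a := by
      intro v hv h
      exact ha (h ▸ Finset.mem_image_of_mem γ₀.1 hv)
    exact ⟨⟨_, lift_strong γ₀.1 γ₀.2 a haγ⟩⟩
end

section
/- Let k ≥ 2 and let G be a finite connected simple graph whose chromatic number is at most k such that the strong k-colour graph S_k(G) is connected. Let v be a vertex of G with neighbourhood N(v), and let N* be a nonempty subset of N(v). Let G* be the graph obtained from G by adding one new vertex v* and joining v* to exactly the vertices in N*. Then S_k(G*) is connected. -/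
namespace StrongColorProof

open SimpleGraph Function

variable {V : Type*} {k : ℕ}

/-- Abbreviation for the vertex type of the strong colour graph. -/
abbrev SC (G : SimpleGraph V) (k : ℕ) := {α : V → Fin k // IsStrongColoring G α}

lemma adj_ss {G : SimpleGraph V} {N : Set V} {a b : V} :
    (addVertex G N).Adj (some a) (some b) ↔ G.Adj a b := by
  rw [addVertex, SimpleGraph.fromRel_adj]
  constructor
  · rintro ⟨hne, h | h⟩
    · rcases h with ⟨a', b', h1, h2, h3⟩ | ⟨h, -⟩
      · obtain rfl := Option.some.inj h1
        obtain rfl := Option.some.inj h2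
        exact h3
      · exact nomatch h
    · rcases h with ⟨a', b', h1, h2, h3⟩ | ⟨h, -⟩
      · obtain rfl := Option.some.inj h1
        obtain rfl := Option.some.inj h2
        exact h3.symm
      · exact nomatch h
  · intro h
    exact ⟨by simpa using h.ne, Or.inl (Or.inl ⟨a, b, rfl, rfl, h⟩)⟩

lemma adj_ns {G : SimpleGraph V} {N : Set V} {b : V} :
    (addVertex G N).Adj none (some b) ↔ b ∈ N := by
  rw [addVertex, SimpleGraph.fromRel_adj]
  constructor
  · rintro ⟨-, h | h⟩
    · rcases h with ⟨a', b', h1, -, -⟩ | ⟨-, v', hv', h2⟩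
      · exact nomatch h1
      · obtain rfl := Option.some.inj h2
        exact hv'
    · rcases h with ⟨a', b', -, h2, -⟩ | ⟨h, -⟩
      · exact nomatch h2
      · exact nomatch h
  · intro h
    exact ⟨by simp, Or.inl (Or.inr ⟨rfl, b, h, rfl⟩)⟩

/-- If two strong colourings agree off a single vertex, they are reachable from one
another in the strong colour graph. -/
lemma reach_eq_off {W : Type*} {H : SimpleGraph W} {A B : SC H k} (x : W)
    (h : ∀ y, y ≠ x → A.1 y = B.1 y) : (strongColorGraph H k).Reachable A B := by
  by_cases hx : A.1 x = B.1 x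
  · have hAB : A = B := Subtype.ext (funext fun y => by
      by_cases hy : y = x
      · rw [hy]; exact hx
      · exact h y hy)
    rw [hAB]
  · refine SimpleGraph.Adj.reachable ?_
    exact ⟨x, hx, fun y hy => by
      by_contra hyx
      exact hy (h y hyx)⟩

/-- Glue a colouring of `V` with a colour for the new vertex. -/
lemma elim_strong {G : SimpleGraph V} {N : Set V} {β : V → Fin k} {d : Fin k}
    (hp : ∀ ⦃a b⦄, G.Adj a b → β a ≠ β b)
    (hd : ∀ n ∈ N, d ≠ β n)
    (hs : ∀ e, e = d ∨ ∃ y, β y = e) :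
    IsStrongColoring (addVertex G N) (fun o => Option.elim o d β) := by
  constructor
  · rintro (_ | a) (_ | b) hab
    · exact absurd hab ((addVertex G N).loopless.irrefl none)
    · exact hd b (adj_ns.1 hab)
    · exact (hd a (adj_ns.1 hab.symm)).symm
    · exact hp (adj_ss.1 hab)
  · intro e
    rcases hs e with rfl | ⟨y, hy⟩
    · exact ⟨none, rfl⟩
    · exact ⟨some y, hy⟩

/-- Canonical extension of a strong colouring of `G` to `addVertex G N`, giving the
new vertex the colour of `v`. -/
def Ecol (G : SimpleGraph V) (N : Set V) (v : V) (hN : N ⊆ G.neighborSet v) (b : SC G k) :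
    SC (addVertex G N) k :=
  ⟨fun o => Option.elim o (b.1 v) b.1,
    elim_strong b.2.1 (fun n hn => b.2.1 (hN hn)) (fun e => Or.inr (b.2.2 e))⟩

lemma Estep (G : SimpleGraph V) (N : Set V) (v : V) (hN : N ⊆ G.neighborSet v)
    {b b' : SC G k} (hadj : (strongColorGraph G k).Adj b b') :
    (strongColorGraph (addVertex G N) k).Reachable (Ecol G N v hN b) (Ecol G N v hN b') := by
  obtain ⟨x0, hx0, hu⟩ := hadj
  have heq : ∀ y, y ≠ x0 → b.1 y = b'.1 y := fun y hy => by
    by_contra h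
    exact hy (hu y h)
  have hmid : IsStrongColoring (addVertex G N) (fun o => Option.elim o (b.1 v) b'.1) := by
    refine elim_strong b'.2.1 ?_ (fun e => Or.inr (b'.2.2 e))
    intro n hn
    have hvn : G.Adj v n := hN hn
    by_cases hnx : n = x0
    · subst hnx
      by_cases hvx : v = n
      · exact absurd (hvx ▸ hvn) (G.loopless.irrefl v)
      · rw [heq v hvx]
        exact b'.2.1 hvn
    · rw [← heq n hnx]
      exact b.2.1 hvn
  have r1 : (strongColorGraph (addVertex G N) k).Reachable (Ecol G N v hN b) ⟨_, hmid⟩ := by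
    refine reach_eq_off (some x0) ?_
    rintro (_ | z) hz
    · rfl
    · have hzx : z ≠ x0 := fun h => hz (by rw [h])
      exact heq z hzx
  have r2 : (strongColorGraph (addVertex G N) k).Reachable ⟨_, hmid⟩ (Ecol G N v hN b') := by
    refine reach_eq_off none ?_
    rintro (_ | z) hz
    · exact absurd rfl hz
    · rfl
  exact r1.trans r2

lemma Elift (G : SimpleGraph V) (N : Set V) (v : V) (hN : N ⊆ G.neighborSet v)
    {b b' : SC G k} (h : (strongColorGraph G k).Reachable b b') :
    (strongColorGraph (addVertex G N) k).Reachable (Ecol G N v hN b) (Ecol G N v hN b') := by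
  rw [SimpleGraph.reachable_iff_reflTransGen] at h
  induction h with
  | refl => exact Reachable.refl _
  | tail _ h2 ih => exact ih.trans (Estep G N v hN h2)

/-- Proper colourings of `G` avoiding the colour `c` but using all other colours. -/
def GoodCol (G : SimpleGraph V) (c : Fin k) (m : V → Fin k) : Prop :=
  (∀ ⦃a b⦄, G.Adj a b → m a ≠ m b) ∧ (∀ e, e ≠ c → ∃ y, m y = e) ∧ ∀ y, m y ≠ c

/-- One recolouring step among `c`-avoiding colourings. -/
def StepR (G : SimpleGraph V) (c : Fin k) (m m' : V → Fin k) : Prop :=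
  GoodCol G c m' ∧ ∃ x, ∀ y, y ≠ x → m y = m' y

lemma R_good {G : SimpleGraph V} {c : Fin k} {l0 m : V → Fin k}
    (h : Relation.ReflTransGen (StepR G c) l0 m) (h0 : GoodCol G c l0) : GoodCol G c m := by
  induction h with
  | refl => exact h0
  | tail _ h2 _ => exact h2.1

/-- `x` carries a repeated colour in some reachable `c`-avoiding colouring. -/
def RepB (G : SimpleGraph V) (c : Fin k) (l0 : V → Fin k) (x : V) : Prop :=
  ∃ m, Relation.ReflTransGen (StepR G c) l0 m ∧ ∃ y, y ≠ x ∧ m y = m x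

/-- Any ever-repeated vertex is adjacent to every never-repeated vertex. -/
lemma repB_adj {G : SimpleGraph V} {c : Fin k} {l0 : V → Fin k}
    (h0 : GoodCol G c l0) {x y : V} (hx : RepB G c l0 x) (hy : ¬ RepB G c l0 y) :
    G.Adj x y := by
  classical
  obtain ⟨m, hm, x', hx', hcolx⟩ := hx
  by_contra hadj
  have hxy : x ≠ y := fun h => hy (h ▸ ⟨m, hm, x', hx', hcolx⟩)
  have hgm : GoodCol G c m := R_good hm h0
  set m' : V → Fin k := fun z => if z = x then m y else m z with hm'
  have hm'x : m' x = m y := by rw [hm']; simp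
  have hm'ne : ∀ z, z ≠ x → m' z = m z := fun z hz => by rw [hm']; simp [hz]
  have hgood' : GoodCol G c m' := by
    refine ⟨?_, ?_, ?_⟩
    · intro a b hab
      by_cases ha : a = x <;> by_cases hb : b = x
      · exact absurd hab (by rw [ha, hb]; exact G.loopless.irrefl x)
      · rw [ha] at hab ⊢
        rw [hm'x, hm'ne b hb]
        have hby : b ≠ y := fun h => hadj (h ▸ hab)
        exact fun h => hy ⟨m, hm, b, hby, h.symm⟩
      · rw [hb] at hab ⊢
        rw [hm'x, hm'ne a ha]
        have hay : a ≠ y := fun h => hadj (h ▸ hab.symm)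
        exact fun h => hy ⟨m, hm, a, hay, h⟩
      · rw [hm'ne a ha, hm'ne b hb]
        exact hgm.1 hab
    · intro e he
      obtain ⟨z, hz⟩ := hgm.2.1 e he
      by_cases hzx : z = x
      · exact ⟨x', by rw [hm'ne x' hx', hcolx, ← hzx, hz]⟩
      · exact ⟨z, by rw [hm'ne z hzx]; exact hz⟩
    · intro z
      by_cases hzx : z = x
      · rw [hzx, hm'x]; exact hgm.2.2 y
      · rw [hm'ne z hzx]; exact hgm.2.2 z
  have hstep : StepR G c m m' := ⟨hgood', x, fun z hz => (hm'ne z hz).symm⟩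
  refine hy ⟨m', hm.tail hstep, x, hxy, ?_⟩
  rw [hm'x, hm'ne y (fun h => hxy h.symm)]

/-- The frozen-structure invariant transported along the strong colour graph. -/
def PredP (G : SimpleGraph V) (c : Fin k) (l0 : V → Fin k) (t : V → Fin k) : Prop :=
  ∀ y, ¬ RepB G c l0 y → t y = l0 y ∧ ∀ x, x ≠ y → t x ≠ l0 y

lemma pred_step {G : SimpleGraph V} {c : Fin k} {l0 : V → Fin k}
    (h0 : GoodCol G c l0) {A B' : SC G k}
    (hadj : (strongColorGraph G k).Adj A B') (hPA : PredP G c l0 A.1) :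
    PredP G c l0 B'.1 := by
  obtain ⟨x0, hx0, hu⟩ := hadj
  have heq : ∀ y, y ≠ x0 → A.1 y = B'.1 y := fun y hy => by
    by_contra h
    exact hy (hu y h)
  have hx0B : RepB G c l0 x0 := by
    by_contra hxB
    obtain ⟨hfr, hun⟩ := hPA x0 hxB
    obtain ⟨y', hy'⟩ := B'.2.2 (A.1 x0)
    have hy'x : y' ≠ x0 := by
      intro h
      rw [h] at hy'
      exact hx0 hy'.symm
    exact hun y' hy'x (by rw [heq y' hy'x, hy', hfr])
  intro y hyB
  have hyx0 : y ≠ x0 := fun h => hyB (h ▸ hx0B)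
  obtain ⟨hfr, hun⟩ := hPA y hyB
  have hBy : B'.1 y = l0 y := by rw [← heq y hyx0]; exact hfr
  refine ⟨hBy, ?_⟩
  intro x hx
  by_cases hxx0 : x = x0
  · subst hxx0
    have hadjxy : G.Adj x y := repB_adj h0 hx0B hyB
    have hne := B'.2.1 hadjxy
    exact fun h => hne (h.trans hBy.symm)
  · rw [← heq x hxx0]
    exact hun x hx

/-- If the vertex `v` can never acquire a repeated colour in the `c`-avoiding
reconfiguration space, then the strong colour graph of `G` is disconnected: contradiction. -/
lemma stuck_false {G : SimpleGraph V} [Fintype V] {c : Fin k} {l0 : V → Fin k} {v : V}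
    (hS : (strongColorGraph G k).Connected)
    (h0 : GoodCol G c l0)
    (hstuck : ¬ RepB G c l0 v) : False := by
  classical
  -- |V| ≥ k
  obtain ⟨b0⟩ := hS.nonempty
  have hcard : k ≤ Fintype.card V := by
    simpa using Fintype.card_le_of_surjective b0.1 b0.2.2
  -- l0 is not injective
  have hninj : ¬ Function.Injective l0 := by
    intro hinj
    have hc2 : Fintype.card V ≤ k := by
      simpa using Fintype.card_le_of_injective l0 hinj
    have hbij : Function.Bijective l0 :=
      (Fintype.bijective_iff_injective_and_card l0).2
        ⟨hinj, by rw [Fintype.card_fin]; exact le_antisymm hc2 hcard⟩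
    obtain ⟨y, hy⟩ := hbij.2 c
    exact h0.2.2 y hy
  obtain ⟨w, w', hcol, hww⟩ := Function.not_injective_iff.1 hninj
  have hBw : RepB G c l0 w := ⟨l0, Relation.ReflTransGen.refl, w', Ne.symm hww, hcol.symm⟩
  -- the colouring t0
  set t0 : V → Fin k := fun z => if z = w then c else l0 z with ht0def
  have ht0w : t0 w = c := by rw [ht0def]; simp
  have ht0ne : ∀ z, z ≠ w → t0 z = l0 z := fun z hz => by rw [ht0def]; simp [hz]
  have ht0 : IsStrongColoring G t0 := by
    constructor
    · intro a b hab
      by_cases haw : a = w <;> by_cases hbw : b = w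
      · exact absurd hab (by rw [haw, hbw]; exact G.loopless.irrefl w)
      · rw [haw, ht0w, ht0ne b hbw]
        exact fun h => h0.2.2 b h.symm
      · rw [hbw, ht0w, ht0ne a haw]
        exact h0.2.2 a
      · rw [ht0ne a haw, ht0ne b hbw]
        exact h0.1 hab
    · intro e
      by_cases he : e = c
      · exact ⟨w, by rw [ht0w, he]⟩
      · obtain ⟨y, hy⟩ := h0.2.1 e he
        by_cases hyw : y = w
        · exact ⟨w', by rw [ht0ne w' (Ne.symm hww), ← hcol, ← hyw, hy]⟩
        · exact ⟨y, by rw [ht0ne y hyw]; exact hy⟩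
  -- the invariant holds at t0
  have hP0 : PredP G c l0 t0 := by
    intro y hyB
    have hyw : y ≠ w := fun h => hyB (h ▸ hBw)
    refine ⟨ht0ne y hyw, ?_⟩
    intro x hx
    by_cases hxw : x = w
    · subst hxw
      rw [ht0w]
      exact fun h => h0.2.2 y h.symm
    · rw [ht0ne x hxw]
      exact fun h => hyB ⟨l0, Relation.ReflTransGen.refl, x, hx, h⟩
  -- the swapped colouring
  have hswap : IsStrongColoring G (fun z => Equiv.swap (l0 v) c (t0 z)) := by
    constructor
    · intro a b hab
      exact (Equiv.swap (l0 v) c).injective.ne (ht0.1 hab)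
    · intro e
      obtain ⟨y, hy⟩ := ht0.2 ((Equiv.swap (l0 v) c).symm e)
      exact ⟨y, by show Equiv.swap (l0 v) c (t0 y) = e; rw [hy, Equiv.apply_symm_apply]⟩
  -- transport the invariant along the path given by connectedness
  have hreach := hS.preconnected ⟨t0, ht0⟩ ⟨_, hswap⟩
  rw [SimpleGraph.reachable_iff_reflTransGen] at hreach
  have hPall : ∀ X : SC G k,
      Relation.ReflTransGen (strongColorGraph G k).Adj ⟨t0, ht0⟩ X → PredP G c l0 X.1 := by
    intro X h
    induction h with
    | refl => exact hP0
    | tail _ h2 ih => exact pred_step h0 h2 ih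
  have hPend := hPall _ hreach
  have hvw : v ≠ w := fun h => hstuck (h ▸ hBw)
  have h1 : Equiv.swap (l0 v) c (t0 v) = l0 v := (hPend v hstuck).1
  rw [ht0ne v hvw] at h1
  -- h1 : swap (l0 v) c (l0 v) = l0 v, but LHS = c
  rw [Equiv.swap_apply_left] at h1
  exact h0.2.2 v h1.symm

/-- Mirroring a `c`-avoiding reconfiguration path inside `S_k(addVertex G N)`,
keeping the new vertex coloured `c`. -/
lemma mirror {G : SimpleGraph V} {N : Set V} {c : Fin k} {l0 : V → Fin k}
    (γ : SC (addVertex G N) k) (hdec : γ.1 = fun o => Option.elim o c l0)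
    {m : V → Fin k} (hm : Relation.ReflTransGen (StepR G c) l0 m) :
    ∃ hI : IsStrongColoring (addVertex G N) (fun o => Option.elim o c m),
      (strongColorGraph (addVertex G N) k).Reachable γ ⟨_, hI⟩ := by
  obtain ⟨f, hf⟩ := γ
  simp only at hdec
  subst hdec
  induction hm with
  | refl => exact ⟨hf, Reachable.refl _⟩
  | tail _ h2 ih =>
    obtain ⟨hI, hR⟩ := ih
    obtain ⟨hg', x, hx⟩ := h2
    have hI' : IsStrongColoring (addVertex G N) (fun o => Option.elim o c _) :=
      elim_strong hg'.1 (fun n _ => (hg'.2.2 n).symm)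
        (fun e => if he : e = c then Or.inl he else Or.inr (hg'.2.1 e he))
    refine ⟨hI', hR.trans (reach_eq_off (some x) ?_)⟩
    rintro (_ | z) hz
    · rfl
    · have hzx : z ≠ x := fun h => hz (by rw [h])
      exact hx z hzx

end StrongColorProof

open StrongColorProof SimpleGraph Function in
/-- Adding a new vertex joined to a nonempty subset of the neighbourhood of an
existing vertex preserves connectedness of the strong `k`-colour graph. -/
theorem strongColorGraph_addVertex_neighborSubset_connected
    {V : Type*} [Fintype V] {k : ℕ} (hk : 2 ≤ k)
    (G : SimpleGraph V) (hG : G.Connected) (hχ : G.chromaticNumber ≤ k)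
    (hS : (strongColorGraph G k).Connected)
    (v : V) (N : Set V) (hN : N ⊆ G.neighborSet v) (hNne : N.Nonempty) :
    (strongColorGraph (addVertex G N) k).Connected := by
  classical
  rw [SimpleGraph.connected_iff]
  obtain ⟨b0⟩ := hS.nonempty
  have hvN : v ∉ N := fun h => G.loopless.irrefl v (hN h)
  have key : ∀ γ : SC (addVertex G N) k, ∃ b : SC G k,
      (strongColorGraph (addVertex G N) k).Reachable γ (Ecol G N v hN b) := by
    intro γ
    set c : Fin k := γ.1 none with hc
    set l0 : V → Fin k := fun y => γ.1 (some y) with hl0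
    have hdec : γ.1 = fun o => Option.elim o c l0 := funext fun o => by cases o <;> rfl
    have hl0p : ∀ ⦃a b⦄, G.Adj a b → l0 a ≠ l0 b := fun a b hab => γ.2.1 (adj_ss.2 hab)
    by_cases hsurj : Function.Surjective l0
    · refine ⟨⟨l0, hl0p, hsurj⟩, ?_⟩
      refine reach_eq_off none ?_
      rintro (_ | z) hz
      · exact absurd rfl hz
      · rfl
    · -- the colour c of the new vertex is missing from V
      have h1 : ∀ e, e ≠ c → ∃ y, l0 y = e := by
        intro e he
        obtain ⟨o, ho⟩ := γ.2.2 e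
        cases o with
        | none => exact absurd ho.symm he
        | some y => exact ⟨y, ho⟩
      have h2 : ∀ y, l0 y ≠ c := by
        intro y hy
        refine hsurj fun e => ?_
        by_cases he : e = c
        · exact ⟨y, hy.trans he.symm⟩
        · exact h1 e he
      have h0 : GoodCol G c l0 := ⟨hl0p, h1, h2⟩
      by_cases hv : RepB G c l0 v
      · obtain ⟨m, hm, y, hy, hcol⟩ := hv
        obtain ⟨hI, hR⟩ := mirror γ hdec hm
        have hgm : GoodCol G c m := R_good hm h0
        set m1 : V → Fin k := fun z => if z = v then c else m z with hm1def
        have hm1v : m1 v = c := by rw [hm1def]; simp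
        have hm1ne : ∀ z, z ≠ v → m1 z = m z := fun z hz => by rw [hm1def]; simp [hz]
        have hm1 : IsStrongColoring G m1 := by
          constructor
          · intro a b hab
            by_cases ha : a = v <;> by_cases hb : b = v
            · exact absurd hab (by rw [ha, hb]; exact G.loopless.irrefl v)
            · rw [ha, hm1v, hm1ne b hb]
              exact fun h => hgm.2.2 b h.symm
            · rw [hb, hm1v, hm1ne a ha]
              exact hgm.2.2 a
            · rw [hm1ne a ha, hm1ne b hb]
              exact hgm.1 hab
          · intro e
            by_cases he : e = c
            · exact ⟨v, by rw [hm1v, he]⟩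
            · obtain ⟨z, hz⟩ := hgm.2.1 e he
              by_cases hzv : z = v
              · exact ⟨y, by rw [hm1ne y hy, hcol, ← hzv, hz]⟩
              · exact ⟨z, by rw [hm1ne z hzv]; exact hz⟩
        have hI1 : IsStrongColoring (addVertex G N) (fun o => Option.elim o c m1) := by
          refine elim_strong hm1.1 ?_ (fun e => Or.inr (hm1.2 e))
          intro n hn
          have hnv : n ≠ v := fun h => hvN (h ▸ hn)
          rw [hm1ne n hnv]
          exact (hgm.2.2 n).symm
        refine ⟨⟨m1, hm1⟩, hR.trans ?_⟩
        have hEeq : Ecol G N v hN ⟨m1, hm1⟩ = ⟨fun o => Option.elim o c m1, hI1⟩ := by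
          refine Subtype.ext (funext fun o => ?_)
          cases o with
          | none => exact hm1v
          | some z => rfl
        rw [hEeq]
        refine reach_eq_off (some v) ?_
        rintro (_ | z) hz
        · rfl
        · have hzv : z ≠ v := fun h => hz (by rw [h])
          exact (hm1ne z hzv).symm
      · exact absurd (stuck_false hS h0 hv) id
  refine ⟨fun γ γ' => ?_, ⟨Ecol G N v hN b0⟩⟩
  obtain ⟨b, hb⟩ := key γ
  obtain ⟨b', hb'⟩ := key γ'
  exact hb.trans ((Elift G N v hN (hS.preconnected b b')).trans hb'.symm)
end

section
/- For every finite simple graph G and every positive integer k, if the strong k-colour graph S_k(G) is connected, then the k-colour graph C_k(G) is also connected. -/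
/-- A proper `k`-colouring of `G`. -/
def IsProperColoring {V : Type*} {k : ℕ} (G : SimpleGraph V) (α : V → Fin k) : Prop :=
  ∀ ⦃u v⦄, G.Adj u v → α u ≠ α v

/-- The `k`-colour graph `C_k(G)`: vertices are proper `k`-colourings,
two colourings adjacent iff they differ on exactly one vertex. -/
def colorGraph {V : Type*} (G : SimpleGraph V) (k : ℕ) :
    SimpleGraph {α : V → Fin k // IsProperColoring G α} where
  Adj α β := ∃! v, α.1 v ≠ β.1 v
  symm := by
    constructor
    rintro a b ⟨v, hv, hu⟩
    exact ⟨v, hv.symm, fun w hw => hu w hw.symm⟩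
  loopless := by
    constructor
    rintro a ⟨v, hv, -⟩
    exact hv rfl

/-- The obvious graph homomorphism from the strong colour graph to the colour graph. -/
def strongToColorHom {V : Type*} (G : SimpleGraph V) (k : ℕ) :
    strongColorGraph G k →g colorGraph G k where
  toFun α := ⟨α.1, α.2.1⟩
  map_rel' := fun hab => hab

/-- Every proper colouring is reachable in the colour graph from some strong colouring. -/
lemma reachable_strong_of_proper {V : Type*} [Fintype V] (G : SimpleGraph V) {k : ℕ}
    (hcard : k ≤ Fintype.card V)
    (β : {α : V → Fin k // IsProperColoring G α}) :
    ∃ α : {α : V → Fin k // IsStrongColoring G α},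
      (colorGraph G k).Reachable β ⟨α.1, α.2.1⟩ := by
  classical
  generalize hn : k - (Finset.univ.image β.1).card = n
  induction n using Nat.strong_induction_on generalizing β with
  | _ n ih =>
    by_cases hs : Function.Surjective β.1
    · exact ⟨⟨β.1, β.2, hs⟩, SimpleGraph.Reachable.refl _⟩
    · -- there is a missing colour c
      have himg : (Finset.univ.image β.1) ≠ Finset.univ := by
        intro hcontra
        apply hs
        intro c
        have : c ∈ Finset.univ.image β.1 := hcontra ▸ Finset.mem_univ c
        obtain ⟨w, -, hw⟩ := Finset.mem_image.mp this
        exact ⟨w, hw⟩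
      obtain ⟨c, hc⟩ : ∃ c, c ∉ Finset.univ.image β.1 := by
        by_contra hcon
        push_neg at hcon
        exact himg (Finset.eq_univ_iff_forall.mpr hcon)
      have hcne : ∀ w, β.1 w ≠ c := by
        intro w hw
        exact hc (Finset.mem_image.mpr ⟨w, Finset.mem_univ w, hw⟩)
      have hcardlt : (Finset.univ.image β.1).card < k := by
        have hle : (Finset.univ.image β.1).card ≤ k := by
          simpa using Finset.card_le_card (Finset.subset_univ (Finset.univ.image β.1))
        rcases lt_or_eq_of_le hle with h' | h'
        · exact h'
        · exact absurd (Finset.eq_univ_of_card _ (by simpa using h')) himg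
      -- β is not injective
      obtain ⟨u, v, huv, hne⟩ : ∃ u v, β.1 u = β.1 v ∧ u ≠ v := by
        by_contra hcon
        push_neg at hcon
        have hinj : Function.Injective β.1 := by
          intro a b hab
          by_contra hab'
          exact hab' (hcon a b hab)
        have h1 := Fintype.card_le_of_injective β.1 hinj
        simp only [Fintype.card_fin] at h1
        have h2 : (Finset.univ.image β.1).card = Fintype.card V := by
          rw [Finset.card_image_of_injective _ hinj, Finset.card_univ]
        omega
      set β' : V → Fin k := Function.update β.1 u c with hβ'
      have hβ'u : β' u = c := Function.update_self u c β.1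
      have hβ'w : ∀ w, w ≠ u → β' w = β.1 w := fun w hw => Function.update_of_ne hw c β.1
      have hprop : IsProperColoring G β' := by
        intro a b hab hco
        by_cases ha : a = u
        · by_cases hb : b = u
          · exact hab.ne (ha.trans hb.symm)
          · rw [ha, hβ'u, hβ'w b hb] at hco
            exact hcne b hco.symm
        · by_cases hb : b = u
          · rw [hb, hβ'u, hβ'w a ha] at hco
            exact hcne a hco
          · rw [hβ'w a ha, hβ'w b hb] at hco
            exact β.2 hab hco
      have hadj : (colorGraph G k).Adj β ⟨β', hprop⟩ := by
        show ∃! w, β.1 w ≠ β' w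
        refine ⟨u, ?_, ?_⟩
        · simp only [hβ'u]
          exact hcne u
        · intro w hw
          by_contra hwu
          exact hw (hβ'w w hwu).symm
      -- image strictly grows
      have hsub : Finset.univ.image β.1 ⊂ Finset.univ.image β' := by
        constructor
        · intro x hx
          obtain ⟨w, -, hw⟩ := Finset.mem_image.mp hx
          rcases eq_or_ne w u with rfl | hwu
          · refine Finset.mem_image.mpr ⟨v, Finset.mem_univ v, ?_⟩
            rw [hβ'w v (Ne.symm hne), ← huv, hw]
          · exact Finset.mem_image.mpr ⟨w, Finset.mem_univ w, (hβ'w w hwu).trans hw⟩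
        · intro hcon
          exact hc (hcon (Finset.mem_image.mpr ⟨u, Finset.mem_univ u, hβ'u⟩))
      have hlt : (Finset.univ.image β.1).card < (Finset.univ.image β').card :=
        Finset.card_lt_card hsub
      have hmeas : k - (Finset.univ.image β').card < n := by omega
      obtain ⟨α, hα⟩ := ih _ hmeas ⟨β', hprop⟩ rfl
      exact ⟨α, hadj.reachable.trans hα⟩

/-- If the strong `k`-colour graph `S_k(G)` is connected, then so is the
`k`-colour graph `C_k(G)`. -/
theorem colorGraph_connected_of_strongColorGraph_connected
    {V : Type*} [Fintype V] (G : SimpleGraph V) {k : ℕ} (hk : 0 < k)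
    (h : (strongColorGraph G k).Connected) :
    (colorGraph G k).Connected := by
  classical
  obtain ⟨α₀⟩ := h.nonempty
  have hcard : k ≤ Fintype.card V := by
    have := Fintype.card_le_of_surjective α₀.1 α₀.2.2
    simpa using this
  haveI : Nonempty {α : V → Fin k // IsProperColoring G α} := ⟨⟨α₀.1, α₀.2.1⟩⟩
  refine ⟨?_⟩
  intro β γ
  obtain ⟨a, ha⟩ := reachable_strong_of_proper G hcard β
  obtain ⟨b, hb⟩ := reachable_strong_of_proper G hcard γ
  have hab : (colorGraph G k).Reachable ⟨a.1, a.2.1⟩ ⟨b.1, b.2.1⟩ :=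
    (h.preconnected a b).map (strongToColorHom G k)
  exact ha.trans (hab.trans hb.symm)
end

section
/- Let G be a finite simple graph, let α be a proper 3-colouring of G with colours {1,2,3}, and let v_1, v_2, ..., v_m, v_1 (m ≥ 3) be a cycle in G. Define the weight of an oriented edge (u,v) under α to be +1 if (α(u),α(v)) ∈ {(1,2),(2,3),(3,1)} and −1 if (α(u),α(v)) ∈ {(2,1),(3,2),(1,3)}, and define the weight of the oriented cycle to be the sum of the weights of the oriented edges (v_1,v_2), (v_2,v_3), ..., (v_{m−1},v_m), (v_m,v_1). If this weight is nonzero, then the 3-colour graph C_3(G) is not connected. -/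
/-- The weight of an oriented edge with endpoint colours `a`, `b` in `Fin 3`:
`+1` if `b = a + 1` (cyclically, i.e. `(a,b)` is one of `(1,2), (2,3), (3,1)`),
`-1` if `a = b + 1` (i.e. `(a,b)` is one of `(2,1), (3,2), (1,3)`), else `0`. -/
def edgeWeight (a b : Fin 3) : ℤ :=
  if b = a + 1 then 1 else if a = b + 1 then -1 else 0

lemma edgeWeight_key : ∀ a c x y : Fin 3, x ≠ y → a ≠ x → a ≠ y → x ≠ c → y ≠ c →
    edgeWeight a x + edgeWeight x c = edgeWeight a y + edgeWeight y c := by decide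

lemma edgeWeight_swap : ∀ a b : Fin 3,
    edgeWeight (Equiv.swap 0 1 a) (Equiv.swap 0 1 b) = - edgeWeight a b := by decide

/-- If some cycle of `G` has nonzero weight under a proper 3-colouring `α`,
then the 3-colour graph `C_3(G)` is not connected.  The cycle is given as an
injective `v : Fin m → V` with `v i` adjacent to `v (i+1)` cyclically
(`finRotate m` is the cyclic successor on `Fin m`). -/
theorem colorGraph_three_not_connected_of_cycle_weight_ne_zero
    {V : Type*} [Fintype V] (G : SimpleGraph V)
    (α : V → Fin 3) (hα : IsProperColoring G α)
    {m : ℕ} (hm : 3 ≤ m) (v : Fin m → V) (hinj : Function.Injective v)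
    (hadj : ∀ i : Fin m, G.Adj (v i) (v (finRotate m i)))
    (hW : ∑ i : Fin m, edgeWeight (α (v i)) (α (v (finRotate m i))) ≠ 0) :
    ¬(colorGraph G 3).Connected := by
  -- no fixed points of the rotation
  have hfix : ∀ i : Fin m, finRotate m i ≠ i := by
    obtain ⟨n, rfl⟩ : ∃ n, m = n + 1 := ⟨m - 1, by omega⟩
    intro i h
    rw [finRotate_succ_apply] at h
    have h1 : (1 : Fin (n + 1)) = 0 := by
      have := h
      nth_rewrite 2 [show i = i + 0 by simp] at this
      exact add_left_cancel this
    have := Fin.one_eq_zero_iff.mp h1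
    omega
  set W : {β : V → Fin 3 // IsProperColoring G β} → ℤ :=
    fun β => ∑ i : Fin m, edgeWeight (β.1 (v i)) (β.1 (v (finRotate m i))) with hWdef
  -- invariance under one step
  have hadjW : ∀ β γ, (colorGraph G 3).Adj β γ → W β = W γ := by
    rintro β γ ⟨w, hw, huniq⟩
    have hagree : ∀ u, u ≠ w → β.1 u = γ.1 u := by
      intro u hu
      by_contra h
      exact hu (huniq u h)
    by_cases hin : ∃ i, v i = w
    · obtain ⟨i₀, hi₀⟩ := hin
      set j₀ := (finRotate m).symm i₀ with hj₀
      have hrotj : finRotate m j₀ = i₀ := (finRotate m).apply_symm_apply i₀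
      have hji : j₀ ≠ i₀ := by
        intro h
        exact hfix i₀ (h ▸ hrotj)
      have hne : i₀ ≠ j₀ := fun h => hji h.symm
      have hvj : v j₀ ≠ w := fun h => hji (hinj (hi₀ ▸ h))
      have hvr : v (finRotate m i₀) ≠ w := fun h => hfix i₀ (hinj (hi₀ ▸ h))
      -- split sums
      have hsplit : ∀ h : Fin m → ℤ, ∑ i : Fin m, h i =
          (h j₀ + h i₀) + ∑ i ∈ Finset.univ \ {j₀, i₀}, h i := by
        intro h
        rw [add_comm, Finset.sum_sdiff_eq_sub (Finset.subset_univ _),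
          Finset.sum_pair hji]
        ring
      simp only [hWdef]
      rw [hsplit, hsplit]
      congr 1
      · -- the two changed terms
        have hb1 : β.1 (v j₀) ≠ β.1 w := hi₀ ▸ hrotj ▸ β.2 (hadj j₀)
        have hb2 : β.1 w ≠ β.1 (v (finRotate m i₀)) := hi₀ ▸ β.2 (hadj i₀)
        have hg1 : γ.1 (v j₀) ≠ γ.1 w := hi₀ ▸ hrotj ▸ γ.2 (hadj j₀)
        have hg2 : γ.1 w ≠ γ.1 (v (finRotate m i₀)) := hi₀ ▸ γ.2 (hadj i₀)
        have ha : β.1 (v j₀) = γ.1 (v j₀) := hagree _ hvj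
        have hc : β.1 (v (finRotate m i₀)) = γ.1 (v (finRotate m i₀)) := hagree _ hvr
        rw [hrotj, hi₀, ha, hc]
        exact edgeWeight_key _ _ _ _ hw (ha ▸ hb1) hg1 (hc ▸ hb2) hg2
      · apply Finset.sum_congr rfl
        intro i hi
        simp only [Finset.mem_sdiff, Finset.mem_insert, Finset.mem_singleton,
          Finset.mem_univ, true_and, not_or] at hi
        have h1 : v i ≠ w := fun h => hi.2 (by rw [← hi₀] at h; exact hinj h)
        have h2 : v (finRotate m i) ≠ w := by
          intro h
          have : finRotate m i = i₀ := hinj (hi₀ ▸ h)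
          exact hi.1 ((finRotate m).eq_symm_apply.mpr this)
        rw [hagree _ h1, hagree _ h2]
    · push_neg at hin
      apply Finset.sum_congr rfl
      intro i _
      rw [hagree _ (hin i), hagree _ (hin (finRotate m i))]
  have hreach : ∀ β γ, (colorGraph G 3).Reachable β γ → W β = W γ := by
    intro β γ h
    obtain ⟨p⟩ := h
    induction p with
    | nil => rfl
    | cons h _ ih => exact (hadjW _ _ h).trans ih
  intro hconn
  -- the swapped colouring
  have hprop : IsProperColoring G (fun u => Equiv.swap (0 : Fin 3) 1 (α u)) := by
    intro u u' h he
    exact hα h ((Equiv.swap (0 : Fin 3) 1).injective he)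
  have hWswap : W ⟨fun u => Equiv.swap (0 : Fin 3) 1 (α u), hprop⟩ = - W ⟨α, hα⟩ := by
    simp only [hWdef]
    rw [← Finset.sum_neg_distrib]
    exact Finset.sum_congr rfl fun i _ => edgeWeight_swap _ _
  have := hreach _ _ (hconn.preconnected ⟨α, hα⟩ ⟨fun u => Equiv.swap (0 : Fin 3) 1 (α u), hprop⟩)
  rw [hWswap] at this
  have hWα : W ⟨α, hα⟩ ≠ 0 := hW
  omega
end

section
/- The strong colour graph S_4(C_5) of the cycle on 5 vertices is not connected. -/
set_option maxRecDepth 100000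
set_option maxHeartbeats 4000000


/-- An explicit connected component of `S_4(C_5)`: the component of `![0,1,0,2,3]`. -/
def Scomp : List (Fin 5 → Fin 4) :=
  [![0,1,0,2,3], ![0,1,3,2,1], ![0,1,3,2,3], ![0,2,3,0,1], ![0,2,3,2,1],
   ![1,0,1,3,2], ![1,0,2,3,0], ![1,0,2,3,2], ![1,3,2,1,0], ![1,3,2,3,0],
   ![2,1,0,1,3], ![2,1,0,2,3], ![2,3,0,1,0], ![2,3,0,1,3], ![2,3,2,1,0],
   ![3,0,1,0,2], ![3,0,1,3,2], ![3,2,1,0,1], ![3,2,1,0,2], ![3,2,3,0,1]]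

lemma scomp_closed' : ∀ f ∈ Scomp, ∀ a b c d e : Fin 4,
    (∀ u v : Fin 5, u - v = 1 → (![a,b,c,d,e] : Fin 5 → Fin 4) u ≠ ![a,b,c,d,e] v) →
    (∀ x : Fin 4, ∃ v, (![a,b,c,d,e] : Fin 5 → Fin 4) v = x) →
    (Finset.univ.filter fun v => f v ≠ (![a,b,c,d,e] : Fin 5 → Fin 4) v).card = 1 →
    (![a,b,c,d,e] : Fin 5 → Fin 4) ∈ Scomp := by
  decide

lemma eta5 (g : Fin 5 → Fin 4) : g = ![g 0, g 1, g 2, g 3, g 4] := by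
  funext i; fin_cases i <;> rfl

lemma scomp_closed : ∀ f ∈ Scomp, ∀ g : Fin 5 → Fin 4,
    (∀ u v : Fin 5, u - v = 1 → g u ≠ g v) →
    (∀ c : Fin 4, ∃ v, g v = c) →
    (Finset.univ.filter fun v => f v ≠ g v).card = 1 → g ∈ Scomp := by
  intro f hf g h1 h2 h3
  rw [eta5 g] at h1 h2 h3 ⊢
  exact scomp_closed' f hf _ _ _ _ _ h1 h2 h3

lemma strong_iff (g : Fin 5 → Fin 4) :
    IsStrongColoring (SimpleGraph.cycleGraph 5) g ↔
      ((∀ u v : Fin 5, u - v = 1 → g u ≠ g v) ∧ ∀ c : Fin 4, ∃ v, g v = c) := by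
  constructor
  · rintro ⟨hp, hs⟩
    refine ⟨fun u v huv => hp ?_, hs⟩
    exact (SimpleGraph.cycleGraph_adj (n := 3)).mpr (Or.inl huv)
  · rintro ⟨hp, hs⟩
    refine ⟨fun u v huv => ?_, hs⟩
    rcases (SimpleGraph.cycleGraph_adj (n := 3)).mp huv with h | h
    · exact hp u v h
    · exact (hp v u h).symm

lemma existsUnique_iff_card (p : Fin 5 → Prop) [DecidablePred p] :
    (∃! v, p v) ↔ (Finset.univ.filter p).card = 1 := by
  rw [Finset.card_eq_one]
  constructor
  · rintro ⟨a, ha, hu⟩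
    refine ⟨a, ?_⟩
    ext b
    simp only [Finset.mem_filter, Finset.mem_univ, true_and, Finset.mem_singleton]
    exact ⟨fun hb => hu b hb, fun hb => hb ▸ ha⟩
  · rintro ⟨a, ha⟩
    have hmem : ∀ b, p b ↔ b = a := by
      intro b
      have := Finset.ext_iff.mp ha b
      simpa using this
    exact ⟨a, (hmem a).mpr rfl, fun b hb => (hmem b).mp hb⟩

/-- The strong colour graph `S_4(C_5)` is not connected. -/
theorem strongColorGraph_cycleGraph_five_four_not_connected :
    ¬(strongColorGraph (SimpleGraph.cycleGraph 5) 4).Connected := by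
  intro h
  have hA : IsStrongColoring (SimpleGraph.cycleGraph 5) ![0,1,0,2,3] :=
    (strong_iff _).mpr (by decide)
  have hB : IsStrongColoring (SimpleGraph.cycleGraph 5) ![0,1,0,3,2] :=
    (strong_iff _).mpr (by decide)
  have hreach := h.preconnected ⟨![0,1,0,2,3], hA⟩ ⟨![0,1,0,3,2], hB⟩
  obtain ⟨w⟩ := hreach
  have key : ∀ (x y : {α : Fin 5 → Fin 4 // IsStrongColoring (SimpleGraph.cycleGraph 5) α})
      (_ : (strongColorGraph (SimpleGraph.cycleGraph 5) 4).Walk x y),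
      x.1 ∈ Scomp → y.1 ∈ Scomp := by
    intro x y w
    induction w with
    | nil => exact id
    | cons hadj p ih =>
      intro hx
      refine ih ?_
      rename_i u v z
      have hz := (strong_iff v.1).mp v.2
      have hcard : (Finset.univ.filter fun i => u.1 i ≠ v.1 i).card = 1 :=
        (existsUnique_iff_card _).mp hadj
      exact scomp_closed u.1 hx v.1 hz.1 hz.2 hcard
  have hAin : (![0,1,0,2,3] : Fin 5 → Fin 4) ∈ Scomp := by decide
  have hBin : (![0,1,0,3,2] : Fin 5 → Fin 4) ∈ Scomp :=
    key _ _ w hAin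
  revert hBin
  decide
end

section
/- The strong colour graph S_3(I) is connected, where I is the tree on six vertices x_1, x_2, x_3, x_4, x_5, x_6 with edge set {x_1x_2, x_2x_3, x_4x_5, x_5x_6, x_2x_5}. -/
/-- The tree `I` on six vertices `0,…,5` (standing for `x₁,…,x₆`) with edges
`x₁x₂, x₂x₃, x₄x₅, x₅x₆, x₂x₅`: two paths on three vertices joined by an edge
between their middle vertices. -/
def treeI : SimpleGraph (Fin 6) :=
  SimpleGraph.fromEdgeSet {s(0, 1), s(1, 2), s(3, 4), s(4, 5), s(1, 4)}

set_option maxRecDepth 10000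

namespace SCGAux

/-- BFS distances to the base colouring, indexed by the base-3 encoding. -/
def rkTable : List ℕ := [0, 0, 0, 0, 0, 0, 0, 0, 0, 0, 0, 0, 0, 0, 0, 0, 0, 0, 0, 0, 0, 0, 0, 0, 0, 0, 0, 0, 0, 0, 0, 0, 0, 0, 0, 0, 0, 0, 0, 0, 0, 0, 0, 0, 0, 0, 0, 0, 0, 0, 0, 0, 0, 0, 0, 0, 0, 0, 0, 0, 0, 0, 0, 0, 0, 0, 0, 0, 0, 0, 0, 0, 0, 0, 0, 0, 0, 0, 0, 0, 0, 0, 0, 0, 0, 0, 0, 5, 4, 0, 0, 0, 3, 0, 0, 0, 4, 3, 0, 0, 1, 2, 0, 0, 0, 0, 0, 0, 0, 0, 0, 0, 0, 0, 0, 0, 0, 0, 0, 0, 0, 0, 0, 0, 0, 0, 0, 0, 0, 0, 0, 0, 0, 0, 0, 0, 0, 0, 0, 0, 0, 4, 3, 0, 0, 1, 2, 0, 0, 0, 3, 2, 0, 0, 0, 1, 0, 0, 0, 0, 0, 0, 0, 0, 0, 8, 0, 7, 0, 0, 0, 0, 3, 4, 0, 0, 0, 0, 0, 0, 0, 2, 0,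 7, 0, 6, 0, 0, 0, 0, 0, 0, 7, 0, 6, 0, 0, 0, 0, 4, 5, 0, 0, 0, 0, 0, 0, 0, 3, 4, 6, 0, 5, 0, 0, 0, 0, 0, 0, 0, 0, 0, 0, 0, 0, 0, 0, 0, 0, 0, 0, 0, 0, 0, 0, 0, 0, 0, 0, 0, 0, 0, 0, 0, 0, 0, 0, 0, 0, 0, 0, 0, 0, 0, 0, 0, 0, 0, 0, 0, 0, 0, 0, 0, 0, 0, 0, 0, 0, 0, 0, 0, 0, 0, 0, 8, 8, 7, 0, 0, 0, 0, 0, 0, 0, 7, 8, 0, 0, 0, 0, 8, 0, 9, 0, 0, 0, 0, 0, 0, 8, 0, 9, 7, 6, 0, 0, 0, 0, 0, 0, 0, 6, 7, 0, 0, 0, 0, 9, 0, 10, 0, 0, 0, 0, 0, 0, 0, 0, 0, 0, 0, 0, 0, 0, 0, 0, 0, 0, 0, 0, 0, 0, 0, 0, 0, 0, 0, 0, 0, 0, 0, 0, 0, 0, 0, 0, 0, 0, 0, 0, 0, 0, 0, 0, 0, 0, 0, 0, 0, 0, 0, 0, 0, 0, 0, 0, 0, 0, 0, 0, 0, 0,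 0, 0, 0, 0, 0, 0, 0, 0, 0, 0, 0, 0, 0, 0, 0, 0, 0, 0, 0, 0, 0, 0, 0, 0, 0, 7, 0, 6, 0, 0, 0, 0, 4, 5, 0, 0, 0, 0, 0, 0, 0, 3, 4, 6, 0, 5, 0, 0, 0, 0, 0, 0, 8, 0, 7, 0, 0, 0, 0, 5, 6, 0, 0, 0, 0, 0, 0, 0, 4, 5, 7, 0, 0, 0, 0, 0, 0, 0, 0, 0, 0, 0, 0, 0, 0, 0, 0, 0, 0, 0, 0, 0, 0, 0, 0, 0, 0, 0, 0, 0, 0, 0, 0, 0, 0, 0, 0, 0, 0, 0, 0, 0, 0, 0, 0, 0, 0, 0, 0, 0, 0, 0, 0, 0, 0, 0, 0, 0, 0, 0, 0, 0, 0, 8, 0, 9, 7, 6, 0, 0, 0, 0, 0, 0, 0, 6, 7, 0, 0, 0, 0, 9, 0, 10, 0, 0, 0, 0, 0, 0, 9, 0, 10, 0, 5, 0, 0, 0, 0, 0, 0, 0, 5, 6, 0, 0, 0, 0, 10, 0, 11, 0, 0, 0, 0, 0, 0, 0, 0, 0, 6, 5, 0, 0, 3, 4, 0, 0, 0, 5,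 4, 0, 0, 2, 3, 0, 0, 0, 0, 0, 0, 0, 0, 0, 0, 0, 0, 0, 0, 0, 0, 0, 0, 0, 0, 0, 0, 0, 0, 0, 0, 0, 0, 0, 0, 0, 0, 0, 0, 0, 0, 0, 0, 0, 5, 4, 0, 0, 2, 3, 0, 0, 0, 4, 0, 0, 0, 1, 2, 0, 0, 0, 0, 0, 0, 0, 0, 0, 0, 0, 0, 0, 0, 0, 0, 0, 0, 0, 0, 0, 0, 0, 0, 0, 0, 0, 0, 0, 0, 0, 0, 0, 0, 0, 0, 0, 0, 0, 0, 0, 0, 0, 0, 0, 0, 0, 0, 0, 0, 0, 0, 0, 0, 0, 0, 0, 0, 0, 0, 0, 0, 0, 0, 0, 0, 0, 0, 0, 0, 0, 0, 0, 0, 0, 0, 0, 0, 0, 0, 0, 0, 0, 0, 0, 0, 0]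

def encode (α : Fin 6 → Fin 3) : ℕ :=
  (α 0 : ℕ) + 3 * α 1 + 9 * α 2 + 27 * α 3 + 81 * α 4 + 243 * α 5

def rk (α : Fin 6 → Fin 3) : ℕ := rkTable.getD (encode α) 0

def sbase : Fin 6 → Fin 3 := ![1, 0, 2, 2, 1, 0]

def strongP (α : Fin 6 → Fin 3) : Prop :=
  α 0 ≠ α 1 ∧ α 1 ≠ α 2 ∧ α 3 ≠ α 4 ∧ α 4 ≠ α 5 ∧ α 1 ≠ α 4 ∧
    (∃ v, α v = 0) ∧ (∃ v, α v = 1) ∧ (∃ v, α v = 2)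

instance : DecidablePred strongP := fun α => by unfold strongP; infer_instance

lemma encode_eq (α : Fin 6 → Fin 3) : encode α = 154 → α = sbase := by
  revert α; decide

lemma step : ∀ α : Fin 6 → Fin 3, strongP α → encode α = 154 ∨
    ∃ v : Fin 6, ∃ c : Fin 3, c ≠ α v ∧ strongP (Function.update α v c) ∧
      rk (Function.update α v c) < rk α := by
  decide

end SCGAux

namespace SCGAux

lemma treeI_adj_iff (u v : Fin 6) : treeI.Adj u v ↔
    ((u, v) = (0, 1) ∨ (u, v) = (1, 0) ∨ (u, v) = (1, 2) ∨ (u, v) = (2, 1) ∨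
     (u, v) = (3, 4) ∨ (u, v) = (4, 3) ∨ (u, v) = (4, 5) ∨ (u, v) = (5, 4) ∨
     (u, v) = (1, 4) ∨ (u, v) = (4, 1)) := by
  rw [treeI, SimpleGraph.fromEdgeSet_adj]
  simp only [Set.mem_insert_iff, Set.mem_singleton_iff, Sym2.eq_iff, Prod.mk.injEq]
  revert u v
  decide

lemma isStrong_iff (α : Fin 6 → Fin 3) : IsStrongColoring treeI α ↔ strongP α := by
  constructor
  · rintro ⟨hp, hs⟩
    refine ⟨hp (by rw [treeI_adj_iff]; tauto), hp (by rw [treeI_adj_iff]; tauto),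
      hp (by rw [treeI_adj_iff]; tauto), hp (by rw [treeI_adj_iff]; tauto),
      hp (by rw [treeI_adj_iff]; tauto), hs 0, hs 1, hs 2⟩
  · rintro ⟨h1, h2, h3, h4, h5, e0, e1, e2⟩
    constructor
    · intro u v hadj
      rw [treeI_adj_iff] at hadj
      rcases hadj with h | h | h | h | h | h | h | h | h | h <;>
        (rw [Prod.mk.injEq] at h; rw [h.1, h.2]) <;>
        first | assumption | (exact Ne.symm (by assumption))
    · intro c
      fin_cases c
      · exact e0
      · exact e1
      · exact e2

lemma isStrong_sbase : IsStrongColoring treeI sbase := by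
  rw [isStrong_iff]; decide

lemma reach_base : ∀ (n : ℕ) (α : Fin 6 → Fin 3) (h : IsStrongColoring treeI α),
    rk α ≤ n → (strongColorGraph treeI 3).Reachable ⟨α, h⟩ ⟨sbase, isStrong_sbase⟩ := by
  intro n
  induction n with
  | zero =>
    intro α h hn
    rcases step α ((isStrong_iff α).mp h) with he | ⟨v, c, hc, hs', hlt⟩
    · have : α = sbase := encode_eq α he
      subst this
      exact SimpleGraph.Reachable.refl _
    · omega
  | succ n ih =>
    intro α h hn
    rcases step α ((isStrong_iff α).mp h) with he | ⟨v, c, hc, hs', hlt⟩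
    · have : α = sbase := encode_eq α he
      subst this
      exact SimpleGraph.Reachable.refl _
    · have h' : IsStrongColoring treeI (Function.update α v c) := (isStrong_iff _).mpr hs'
      have hadj : (strongColorGraph treeI 3).Adj ⟨α, h⟩ ⟨Function.update α v c, h'⟩ := by
        refine ⟨v, ?_, ?_⟩
        · simp only [Function.update_self]
          exact fun hh => hc hh.symm
        · intro w hw
          by_contra hne
          exact hw (show α w = Function.update α v c w by
            rw [Function.update_of_ne hne])
      exact hadj.reachable.trans (ih _ h' (by omega))

end SCGAux

/-- The strong colour graph `S_3(I)` is connected. -/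
theorem strongColorGraph_treeI_three_connected :
    (strongColorGraph treeI 3).Connected := by
  rw [SimpleGraph.connected_iff]
  refine ⟨fun a b => ?_, ⟨⟨SCGAux.sbase, SCGAux.isStrong_sbase⟩⟩⟩
  obtain ⟨α, hα⟩ := a
  obtain ⟨β, hβ⟩ := b
  exact (SCGAux.reach_base (SCGAux.rk α) α hα le_rfl).trans
    (SCGAux.reach_base (SCGAux.rk β) β hβ le_rfl).symm
end

section
/- For every integer n ≥ 1, the strong colour graph S_3(Ψ_n) is not connected, where Ψ_n is the tree with vertices v_0, v_1, ..., v_n, w_1, w_2 and edges v_0v_i for 1 ≤ i ≤ n together with v_0w_1 and w_1w_2. -/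
/-- The tree `Ψ_n` on `n + 3` vertices: vertex `0` is `v₀`, vertices `1,…,n`
are the leaves `v₁,…,vₙ`, vertex `n+1` is `w₁` and vertex `n+2` is `w₂`; the
edges are `v₀v₁, …, v₀vₙ, v₀w₁, w₁w₂`. -/
def psiTree (n : ℕ) : SimpleGraph (Fin (n + 3)) :=
  SimpleGraph.fromRel (fun x y =>
    (x.val = 0 ∧ 1 ≤ y.val ∧ y.val ≤ n + 1) ∨ (x.val = n + 1 ∧ y.val = n + 2))

lemma psiTree_adj_v0 {n : ℕ} (u : Fin (n + 3)) (h1 : 1 ≤ u.val) (h2 : u.val ≤ n + 1) :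
    (psiTree n).Adj ⟨0, by omega⟩ u := by
  rw [psiTree, SimpleGraph.fromRel_adj]
  refine ⟨fun h => by simp [Fin.ext_iff] at h; omega, Or.inl (Or.inl ⟨rfl, h1, h2⟩)⟩

/-- The colour at `v₀` is preserved along edges of the strong colour graph. -/
lemma adj_fix_v0 {n : ℕ} {x y : {α : Fin (n + 3) → Fin 3 // IsStrongColoring (psiTree n) α}}
    (h : (strongColorGraph (psiTree n) 3).Adj x y) :
    x.1 ⟨0, by omega⟩ = y.1 ⟨0, by omega⟩ := by
  by_contra hne
  obtain ⟨v, hv, huniq⟩ := h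
  have heq : ∀ w : Fin (n + 3), w.val ≠ 0 → x.1 w = y.1 w := by
    intro w hw
    by_contra h'
    have h1 := huniq w h'
    have h2 := huniq _ hne
    have h3 : w = ⟨0, by omega⟩ := h1.trans h2.symm
    exact hw (by rw [h3])
  set v0 : Fin (n + 3) := ⟨0, by omega⟩ with hv0def
  set w2 : Fin (n + 3) := ⟨n + 2, by omega⟩ with hw2def
  -- x must attain colour `y.1 v0` at w2
  have key : ∀ (x y : {α : Fin (n + 3) → Fin 3 // IsStrongColoring (psiTree n) α}),
      x.1 v0 ≠ y.1 v0 → (∀ w : Fin (n + 3), w.val ≠ 0 → x.1 w = y.1 w) →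
      x.1 w2 = y.1 v0 := by
    intro x y hne heq
    obtain ⟨z, hz⟩ := x.2.2 (y.1 v0)
    rcases Nat.lt_or_ge z.val 1 with hz1 | hz1
    · exfalso
      have : z = v0 := by
        apply Fin.ext; rw [hv0def]; show z.val = 0; omega
      rw [this] at hz
      exact hne hz
    rcases Nat.lt_or_ge z.val (n + 2) with hz2 | hz2
    · exfalso
      have hadj := psiTree_adj_v0 z hz1 (by omega)
      have h1 : y.1 z ≠ y.1 v0 := fun hc => y.2.1 hadj hc.symm
      rw [← heq z (by omega)] at h1
      exact h1 hz
    · have : z = w2 := by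
        apply Fin.ext; simp [hw2def]; omega
      rw [← this]; exact hz
  have hx := key x y hne heq
  have hy := key y x (Ne.symm hne) (fun w hw => (heq w hw).symm)
  rw [heq w2 (by simp [hw2def])] at hx
  rw [hx] at hy
  exact hne hy.symm

lemma reach_fix_v0 {n : ℕ} {x y : {α : Fin (n + 3) → Fin 3 // IsStrongColoring (psiTree n) α}}
    (h : (strongColorGraph (psiTree n) 3).Reachable x y) :
    x.1 ⟨0, by omega⟩ = y.1 ⟨0, by omega⟩ := by
  obtain ⟨p⟩ := h
  induction p with
  | nil => rfl
  | cons hadj _ ih => exact (adj_fix_v0 hadj).trans ih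

/-- For every `n ≥ 1`, the strong colour graph `S_3(Ψ_n)` is not connected. -/
theorem strongColorGraph_psiTree_three_not_connected
    {n : ℕ} (hn : 1 ≤ n) :
    ¬(strongColorGraph (psiTree n) 3).Connected := by
  intro hconn
  -- two strong colourings differing at v0
  have mkStrong : ∀ (a b c : Fin 3), a ≠ b → a ≠ c → b ≠ c → b ≠ a →
      IsStrongColoring (psiTree n)
        (fun x : Fin (n + 3) => if x.val = 0 then a else if x.val = n + 1 then b
          else if x.val = n + 2 then a else c) := by
    intro a b c hab hac hbc hba
    constructor
    · intro u v hadj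
      rw [psiTree, SimpleGraph.fromRel_adj] at hadj
      obtain ⟨hne, hr⟩ := hadj
      have hne' : u.val ≠ v.val := fun h => hne (Fin.ext h)
      rcases hr with (⟨h1, h2, h3⟩ | ⟨h1, h2⟩) | (⟨h1, h2, h3⟩ | ⟨h1, h2⟩) <;>
        dsimp only <;> split_ifs <;> omega
    · intro d
      have htri : d = a ∨ d = b ∨ d = c := by
        have h1 := Fin.val_ne_of_ne hab
        have h2 := Fin.val_ne_of_ne hac
        have h3 := Fin.val_ne_of_ne hbc
        have := a.isLt; have := b.isLt; have := c.isLt; have := d.isLt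
        simp only [Fin.ext_iff]
        omega
      rcases htri with h | h | h
      · exact ⟨⟨0, by omega⟩, by simp [h]⟩
      · refine ⟨⟨n + 1, by omega⟩, ?_⟩
        have h0 : ¬((n + 1 : ℕ) = 0) := by omega
        dsimp only
        rw [if_neg h0, if_pos rfl]
        exact h.symm
      · refine ⟨⟨1, by omega⟩, ?_⟩
        have h0 : ¬((1 : ℕ) = 0) := by omega
        have h1 : ¬((1 : ℕ) = n + 1) := by omega
        have h2 : ¬((1 : ℕ) = n + 2) := by omega
        dsimp only
        rw [if_neg h0, if_neg h1, if_neg h2]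
        exact h.symm
  have hA := mkStrong 0 1 2 (by decide) (by decide) (by decide) (by decide)
  have hB := mkStrong 1 0 2 (by decide) (by decide) (by decide) (by decide)
  have hreach := hconn.preconnected ⟨_, hA⟩ ⟨_, hB⟩
  have := reach_fix_v0 hreach
  dsimp only at this
  rw [if_pos rfl, if_pos rfl] at this
  exact absurd this (by decide)
end
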